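/- arXiv:2504.18522 — 5 statements merged into one kernel-verified Lean document; each statement's English description precedes it below -/
import Mathlib

section
/- Let (f, W, P) and (f̃, W̃, P̃) be two models satisfying all the assumptions of the identifiability theorem: for all e ∈ {0, ..., M}, f(Z + W a_e) is equal in distribution to f̃(Z̃ + W̃ a_e) with Z ~ P, Z̃ ~ P̃ independent; f and f̃ are C²-diffeomorphisms onto their images; P = N(−W a_0, I) and P̃ = N(−W̃ a_0, I); and rank(W̃ A) = d_Z or rank(W A) = d_Z. If in addition A has full row rank, i.e., rank(A) = K ≤ M, then there exists an orthogonal matrix O ∈ O(d_Z) such that W̃ = O W. -/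
open MeasureTheory ProbabilityTheory

/-- The multivariate Gaussian distribution `N(m, I)` on `ℝ^d` with mean `m` and
identity covariance, realized as the shift by `m` of a product of standard Gaussians. -/
noncomputable def gaussianId (d : ℕ) (m : Fin d → ℝ) :
    MeasureTheory.Measure (Fin d → ℝ) :=
  (MeasureTheory.Measure.pi fun _ : Fin d => ProbabilityTheory.gaussianReal 0 1).map
    (fun z => m + z)

/-- `f : ℝ^n → ℝ^D` is a `C²`-diffeomorphism onto its image: it is `C²`, injective,
and has a `C²` inverse on its range. -/
def IsC2DiffeoOntoImage {n m : ℕ} (f : (Fin n → ℝ) → (Fin m → ℝ)) : Prop :=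
  ContDiff ℝ 2 f ∧ Function.Injective f ∧
    ∃ g : (Fin m → ℝ) → (Fin n → ℝ), (∀ z, g (f z) = z) ∧
      ContDiffOn ℝ 2 g (Set.range f)

namespace PMIAux

open Matrix Real Set
open scoped ENNReal


open Matrix Real Set
open scoped ENNReal

noncomputable def stdG (d : ℕ) : Measure (Fin d → ℝ) :=
  Measure.pi fun _ : Fin d => gaussianReal 0 1

instance (d : ℕ) : IsProbabilityMeasure (stdG d) := by unfold stdG; infer_instance

lemma gaussianId_def (d : ℕ) (m : Fin d → ℝ) :
    gaussianId d m = (stdG d).map (fun z => m + z) := rfl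

lemma measurable_addLeft {d : ℕ} (m : Fin d → ℝ) :
    Measurable (fun z : Fin d → ℝ => m + z) :=
  measurable_id.const_add m

lemma gaussianId_zero (d : ℕ) : gaussianId d 0 = stdG d := by
  rw [gaussianId_def]; simp

instance (d : ℕ) (m : Fin d → ℝ) : IsProbabilityMeasure (gaussianId d m) := by
  rw [gaussianId_def]; exact Measure.isProbabilityMeasure_map (measurable_addLeft m).aemeasurable

lemma gaussianId_map_add (d : ℕ) (m v : Fin d → ℝ) :
    (gaussianId d m).map (fun z => z + v) = gaussianId d (m + v) := by
  rw [gaussianId_def, gaussianId_def,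
    Measure.map_map (by fun_prop : Measurable fun z : Fin d → ℝ => z + v) (measurable_addLeft m)]
  congr 1; funext z; simp [Function.comp]; abel

lemma lintegral_pi_prod {n : ℕ} (μ : Measure ℝ) [SigmaFinite μ] (f : Fin n → ℝ → ℝ≥0∞)
    (hf : ∀ i, Measurable (f i)) :
    ∫⁻ x : Fin n → ℝ, ∏ i, f i (x i) ∂(Measure.pi fun _ => μ) = ∏ i, ∫⁻ y, f i y ∂μ := by
  induction n with
  | zero => simp [Measure.pi_of_empty]
  | succ n ih =>
    have hmp := measurePreserving_piFinSuccAbove (fun _ : Fin (n + 1) => μ) 0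
    set e := MeasurableEquiv.piFinSuccAbove (fun _ : Fin (n + 1) => ℝ) 0 with he
    have hF : Measurable (fun p : ℝ × (Fin n → ℝ) => f 0 p.1 * ∏ j, f j.succ (p.2 j)) := by
      exact ((hf 0).comp measurable_fst).mul
        (Finset.measurable_prod _ fun j _ => (hf j.succ).comp
          ((measurable_pi_apply j).comp measurable_snd))
    calc ∫⁻ x : Fin (n+1) → ℝ, ∏ i, f i (x i) ∂(Measure.pi fun _ => μ)
        = ∫⁻ x : Fin (n+1) → ℝ, f 0 ((e x).1) * ∏ j, f j.succ ((e x).2 j)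
            ∂(Measure.pi fun _ => μ) := by
          congr 1; funext x
          rw [Fin.prod_univ_succ]
          congr 1
      _ = ∫⁻ p : ℝ × (Fin n → ℝ), f 0 p.1 * ∏ j, f j.succ (p.2 j)
            ∂(μ.prod (Measure.pi fun _ => μ)) := hmp.lintegral_comp hF
      _ = (∫⁻ y, f 0 y ∂μ) * ∏ j : Fin n, ∫⁻ y, f j.succ y ∂μ := by
          rw [lintegral_prod_mul (f := f 0) (g := fun w : Fin n → ℝ => ∏ j, f j.succ (w j))
            ((hf 0).aemeasurable)
            ((Finset.measurable_prod _ fun j _ => (hf j.succ).comp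
              (measurable_pi_apply j)).aemeasurable),
            ih (fun j => f j.succ) (fun j => hf j.succ)]
      _ = ∏ i, ∫⁻ y, f i y ∂μ := (Fin.prod_univ_succ fun i => ∫⁻ y, f i y ∂μ).symm

lemma gaussianReal_shift_density (t : ℝ) :
    gaussianReal t 1 = (gaussianReal 0 1).withDensity
      (fun x => ENNReal.ofReal (Real.exp (x * t - t ^ 2 / 2))) := by
  rw [gaussianReal_of_var_ne_zero _ one_ne_zero, gaussianReal_of_var_ne_zero _ one_ne_zero,
    ← withDensity_mul _ (measurable_gaussianPDF 0 1) (by fun_prop)]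
  congr 1
  funext x
  show ENNReal.ofReal (gaussianPDFReal t 1 x)
      = ENNReal.ofReal (gaussianPDFReal 0 1 x) * ENNReal.ofReal (Real.exp (x * t - t ^ 2 / 2))
  rw [← ENNReal.ofReal_mul (gaussianPDFReal_nonneg _ _ _)]
  congr 1
  unfold gaussianPDFReal
  push_cast
  rw [mul_assoc ((Real.sqrt (2 * π * 1))⁻¹), ← Real.exp_add]
  congr 2
  ring


lemma gaussianId_withDensity (d : ℕ) (m : Fin d → ℝ) :
    gaussianId d m = (stdG d).withDensity
      (fun z => ∏ i, ENNReal.ofReal (Real.exp (z i * m i - m i ^ 2 / 2))) := by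
  have h1 : Measure.pi (fun i : Fin d => gaussianReal (m i) 1) = gaussianId d m := by
    apply Measure.pi_eq
    intro s hs
    rw [gaussianId_def, Measure.map_apply (measurable_addLeft m) (MeasurableSet.univ_pi hs)]
    have hpre : (fun z : Fin d → ℝ => m + z) ⁻¹' (Set.pi Set.univ s)
        = Set.pi Set.univ (fun i => (fun x => m i + x) ⁻¹' s i) := by
      ext z
      simp [Set.mem_pi, Pi.add_apply]
    rw [hpre, stdG, Measure.pi_pi]
    congr 1
    funext i
    rw [show (fun x : ℝ => m i + x) = (fun x : ℝ => x + m i) by funext x; ring,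
      ← Measure.map_apply (measurable_add_const (m i)) (hs i),
      gaussianReal_map_add_const (m i), zero_add]
  have h2 : Measure.pi (fun i : Fin d => gaussianReal (m i) 1)
      = (stdG d).withDensity
        (fun z => ∏ i, ENNReal.ofReal (Real.exp (z i * m i - m i ^ 2 / 2))) := by
    apply Measure.pi_eq
    intro s hs
    rw [withDensity_apply _ (MeasurableSet.univ_pi hs), stdG,
      ← lintegral_indicator (MeasurableSet.univ_pi hs) _]
    have hind : (Set.pi Set.univ s).indicator
          (fun z : Fin d → ℝ => ∏ i, ENNReal.ofReal (Real.exp (z i * m i - m i ^ 2 / 2)))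
        = fun z => ∏ i, (s i).indicator
            (fun x : ℝ => ENNReal.ofReal (Real.exp (x * m i - m i ^ 2 / 2))) (z i) := by
      funext z
      by_cases hz : z ∈ Set.pi Set.univ s
      · rw [Set.indicator_of_mem hz]
        exact (Finset.prod_congr rfl fun i _ =>
          (Set.indicator_of_mem (hz i trivial)
            (fun x : ℝ => ENNReal.ofReal (Real.exp (x * m i - m i ^ 2 / 2)))).symm)
      · rw [Set.indicator_of_notMem hz]
        rw [Set.mem_pi] at hz
        push_neg at hz
        obtain ⟨i, -, hi⟩ := hz
        exact (Finset.prod_eq_zero (Finset.mem_univ i)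
          (Set.indicator_of_notMem hi _)).symm
    simp only [hind]
    rw [lintegral_pi_prod (gaussianReal 0 1)
      (fun i => (s i).indicator fun x : ℝ => ENNReal.ofReal (Real.exp (x * m i - m i ^ 2 / 2)))
      (fun i => Measurable.indicator (by fun_prop) (hs i))]
    refine Finset.prod_congr rfl fun i _ => ?_
    rw [lintegral_indicator (hs i) _, ← withDensity_apply _ (hs i),
      ← gaussianReal_shift_density (m i)]
  rw [← h1, h2]



lemma measurableEmbedding_of_diffeo {n m : ℕ} {f : (Fin n → ℝ) → (Fin m → ℝ)}
    (hf : IsC2DiffeoOntoImage f) : MeasurableEmbedding f :=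
  (hf.1.continuous).measurableEmbedding hf.2.1

lemma exists_measurable_leftInverse {n m : ℕ} {f : (Fin n → ℝ) → (Fin m → ℝ)}
    (hf : IsC2DiffeoOntoImage f) :
    ∃ g : (Fin m → ℝ) → (Fin n → ℝ), Measurable g ∧ ∀ z, g (f z) = z := by
  obtain ⟨g, hg, hgf⟩ := (measurableEmbedding_of_diffeo hf).exists_measurable_extend
    (measurable_id) (fun _ => ⟨0⟩)
  exact ⟨g, hg, fun z => congrFun hgf z⟩

lemma map_withDensity_comp {α β : Type*} [MeasurableSpace α] [MeasurableSpace β]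
    {f : α → β} (hf : Measurable f) (μ : Measure α) {ρ : β → ℝ≥0∞} (hρ : Measurable ρ) :
    (μ.withDensity (fun x => ρ (f x))).map f = (μ.map f).withDensity ρ := by
  ext s hs
  rw [Measure.map_apply hf hs, withDensity_apply _ hs, withDensity_apply _ (hf hs),
    setLIntegral_map hs hρ hf]

lemma gaussianId_withDensity' (d : ℕ) (m : Fin d → ℝ) :
    gaussianId d m = (stdG d).withDensity
      (fun z => ENNReal.ofReal (Real.exp (z ⬝ᵥ m - m ⬝ᵥ m / 2))) := by
  rw [gaussianId_withDensity]
  congr 1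
  funext z
  rw [← ENNReal.ofReal_prod_of_nonneg (fun i _ => (Real.exp_pos _).le), ← Real.exp_sum]
  congr 2
  simp [dotProduct, Finset.sum_sub_distrib, Finset.sum_div, pow_two]


lemma measurable_dot {d : ℕ} (t : Fin d → ℝ) :
    Measurable fun z : Fin d → ℝ => t ⬝ᵥ z := by
  simp only [dotProduct]
  exact Finset.measurable_sum _ fun i _ => (by fun_prop)

lemma measurable_expDot {d : ℕ} (t : Fin d → ℝ) :
    Measurable fun z : Fin d → ℝ => ENNReal.ofReal (Real.exp (t ⬝ᵥ z)) :=
  (Real.measurable_exp.comp (measurable_dot t)).ennreal_ofReal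

lemma lintegral_exp_stdG {d : ℕ} (t : Fin d → ℝ) :
    ∫⁻ z, ENNReal.ofReal (Real.exp (t ⬝ᵥ z)) ∂(stdG d)
      = ENNReal.ofReal (Real.exp (t ⬝ᵥ t / 2)) := by
  have h1 : ∀ s : ℝ, ∫⁻ x, ENNReal.ofReal (Real.exp (s * x)) ∂(gaussianReal 0 1)
      = ENNReal.ofReal (Real.exp (s ^ 2 / 2)) := by
    intro s
    have hone : (1 : ℝ≥0∞) = ∫⁻ x, ENNReal.ofReal (Real.exp (x * s - s ^ 2 / 2))
        ∂(gaussianReal 0 1) := by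
      have := (gaussianReal_shift_density s) ▸
        (measure_univ (μ := gaussianReal s 1))
      rw [← this, withDensity_apply _ MeasurableSet.univ, setLIntegral_univ]
    have : ∫⁻ x, ENNReal.ofReal (Real.exp (s * x)) ∂(gaussianReal 0 1)
        = ∫⁻ x, ENNReal.ofReal (Real.exp (x * s - s ^ 2 / 2))
            * ENNReal.ofReal (Real.exp (s ^ 2 / 2)) ∂(gaussianReal 0 1) := by
      congr 1
      funext x
      rw [← ENNReal.ofReal_mul (Real.exp_pos _).le, ← Real.exp_add]
      ring_nf
    rw [this, lintegral_mul_const _ (by fun_prop), ← hone, one_mul]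
  calc ∫⁻ z, ENNReal.ofReal (Real.exp (t ⬝ᵥ z)) ∂(stdG d)
      = ∫⁻ z : Fin d → ℝ, ∏ i, ENNReal.ofReal (Real.exp (t i * z i))
          ∂(Measure.pi fun _ => gaussianReal 0 1) := by
        rw [stdG]
        congr 1
        funext z
        rw [← ENNReal.ofReal_prod_of_nonneg (fun i _ => (Real.exp_pos _).le), ← Real.exp_sum]
        rfl
    _ = ∏ i, ∫⁻ x, ENNReal.ofReal (Real.exp (t i * x)) ∂(gaussianReal 0 1) :=
        lintegral_pi_prod (gaussianReal 0 1)
          (fun i => fun x => ENNReal.ofReal (Real.exp (t i * x)))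
          (fun i => (Real.measurable_exp.comp (measurable_id.const_mul (t i))).ennreal_ofReal)
    _ = ∏ i, ENNReal.ofReal (Real.exp (t i ^ 2 / 2)) := by
        exact Finset.prod_congr rfl fun i _ => h1 (t i)
    _ = ENNReal.ofReal (Real.exp (t ⬝ᵥ t / 2)) := by
        rw [← ENNReal.ofReal_prod_of_nonneg (fun i _ => (Real.exp_pos _).le), ← Real.exp_sum]
        congr 2
        simp [dotProduct, Finset.sum_div, pow_two]

lemma lintegral_exp_gaussianId {d : ℕ} (m t : Fin d → ℝ) :
    ∫⁻ z, ENNReal.ofReal (Real.exp (t ⬝ᵥ z)) ∂(gaussianId d m)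
      = ENNReal.ofReal (Real.exp (t ⬝ᵥ m + t ⬝ᵥ t / 2)) := by
  rw [gaussianId_def, lintegral_map (measurable_expDot t) (measurable_addLeft m)]
  have : ∀ z : Fin d → ℝ, ENNReal.ofReal (Real.exp (t ⬝ᵥ (m + z)))
      = ENNReal.ofReal (Real.exp (t ⬝ᵥ m)) * ENNReal.ofReal (Real.exp (t ⬝ᵥ z)) := by
    intro z
    rw [← ENNReal.ofReal_mul (Real.exp_pos _).le, ← Real.exp_add, dotProduct_add]
  simp_rw [this]
  rw [lintegral_const_mul _ (measurable_expDot t), lintegral_exp_stdG,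
    ← ENNReal.ofReal_mul (Real.exp_pos _).le, ← Real.exp_add]

lemma isUnit_of_rank_eq {n : ℕ} (B : Matrix (Fin n) (Fin n) ℝ) (h : B.rank = n) : IsUnit B := by
  rw [← Matrix.mulVec_surjective_iff_isUnit]
  have htop : LinearMap.range B.mulVecLin = ⊤ := by
    apply Submodule.eq_top_of_finrank_eq
    rw [Matrix.rank] at h
    simp [h]
  intro v
  exact LinearMap.range_eq_top.mp htop v


lemma pushforward_density {n D : ℕ} {f : (Fin n → ℝ) → (Fin D → ℝ)} (hfm : Measurable f)
    {g : (Fin D → ℝ) → (Fin n → ℝ)} (hg : Measurable g) (hgf : ∀ z, g (f z) = z)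
    (m : Fin n → ℝ) :
    (gaussianId n m).map f = ((stdG n).map f).withDensity
      (fun y => ENNReal.ofReal (Real.exp (g y ⬝ᵥ m - m ⬝ᵥ m / 2))) := by
  have hmeasρ : Measurable (fun y : Fin D → ℝ =>
      ENNReal.ofReal (Real.exp (g y ⬝ᵥ m - m ⬝ᵥ m / 2))) := by
    apply Measurable.ennreal_ofReal
    apply Real.measurable_exp.comp
    apply Measurable.sub_const
    have : (fun y : Fin D → ℝ => g y ⬝ᵥ m) = (fun y => m ⬝ᵥ g y) := by
      funext y; exact dotProduct_comm _ _
    rw [this]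
    exact (measurable_dot m).comp hg
  have hfun : (fun z : Fin n → ℝ => ENNReal.ofReal (Real.exp (z ⬝ᵥ m - m ⬝ᵥ m / 2)))
      = fun x => ENNReal.ofReal (Real.exp (g (f x) ⬝ᵥ m - m ⬝ᵥ m / 2)) := by
    funext z; rw [hgf z]
  rw [gaussianId_withDensity', hfun, map_withDensity_comp hfm _ hmeasρ]

theorem aux_main (dZ D K M : ℕ)
    (a : Fin (M + 1) → (Fin K → ℝ))
    (A : Matrix (Fin K) (Fin M) ℝ)
    (hA : A = Matrix.of fun k (e : Fin M) => a e.succ k - a 0 k)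
    (f ftilde : (Fin dZ → ℝ) → (Fin D → ℝ))
    (W Wt : Matrix (Fin dZ) (Fin K) ℝ)
    (hf : IsC2DiffeoOntoImage f) (hft : IsC2DiffeoOntoImage ftilde)
    (heq : ∀ e : Fin (M + 1),
      (gaussianId dZ (-(W.mulVec (a 0)))).map (fun z => f (z + W.mulVec (a e))) =
        (gaussianId dZ (-(Wt.mulVec (a 0)))).map (fun z => ftilde (z + Wt.mulVec (a e))))
    (hrank : (Wt * A).rank = dZ) :
    ∃ O : Matrix (Fin dZ) (Fin dZ) ℝ,
      O * O.transpose = 1 ∧ Wt * A = O * (W * A) := by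
  classical
  have hfc : Continuous f := hf.1.continuous
  have hftc : Continuous ftilde := hft.1.continuous
  have hembf : MeasurableEmbedding f := hfc.measurableEmbedding hf.2.1
  have hembft : MeasurableEmbedding ftilde := hftc.measurableEmbedding hft.2.1
  obtain ⟨g, hgmeas, hgf⟩ := exists_measurable_leftInverse hf
  obtain ⟨gt, hgtmeas, hgtf⟩ := exists_measurable_leftInverse hft
  set me : Fin (M + 1) → (Fin dZ → ℝ) := fun e => W.mulVec (a e - a 0) with hme
  set mt : Fin (M + 1) → (Fin dZ → ℝ) := fun e => Wt.mulVec (a e - a 0) with hmt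
  have hme0 : me 0 = 0 := by simp [hme]
  have hmt0 : mt 0 = 0 := by simp [hmt]
  -- reformulate the distributional equality
  have heq' : ∀ e, (gaussianId dZ (me e)).map f = (gaussianId dZ (mt e)).map ftilde := by
    intro e
    have h1 : ∀ (V : Matrix (Fin dZ) (Fin K) ℝ) (φ : (Fin dZ → ℝ) → (Fin D → ℝ)),
        Continuous φ →
        (gaussianId dZ (-(V.mulVec (a 0)))).map (fun z => φ (z + V.mulVec (a e)))
          = (gaussianId dZ (V.mulVec (a e - a 0))).map φ := by
      intro V φ hφ
      have hmean : V.mulVec (a e - a 0) = -(V.mulVec (a 0)) + V.mulVec (a e) := by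
        rw [Matrix.mulVec_sub]; abel
      rw [hmean, ← gaussianId_map_add dZ (-(V.mulVec (a 0))) (V.mulVec (a e)),
        Measure.map_map hφ.measurable (by fun_prop :
          Measurable fun z : Fin dZ → ℝ => z + V.mulVec (a e))]
      rfl
    rw [hme, hmt]
    rw [← h1 W f hfc, ← h1 Wt ftilde hftc]
    exact heq e
  set ν : Measure (Fin D → ℝ) := (stdG dZ).map f with hν
  have hν' : ν = (stdG dZ).map ftilde := by
    have := heq' 0
    rwa [hme0, hmt0, gaussianId_zero] at this
  have hνprob : IsProbabilityMeasure ν :=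
    Measure.isProbabilityMeasure_map hfc.measurable.aemeasurable
  -- the transfer map
  set h : (Fin dZ → ℝ) → (Fin dZ → ℝ) := fun z => gt (f z) with hh
  have hhmeas : Measurable h := hgtmeas.comp hfc.measurable
  -- pointwise a.e. density identity
  have hae2 : ∀ᵐ z ∂(stdG dZ), ∀ e,
      z ⬝ᵥ me e - me e ⬝ᵥ me e / 2 = h z ⬝ᵥ mt e - mt e ⬝ᵥ mt e / 2 := by
    rw [MeasureTheory.ae_all_iff]
    intro e
    have hwd : ν.withDensity (fun y => ENNReal.ofReal (Real.exp (g y ⬝ᵥ me e - me e ⬝ᵥ me e / 2)))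
        = ν.withDensity (fun y => ENNReal.ofReal (Real.exp (gt y ⬝ᵥ mt e - mt e ⬝ᵥ mt e / 2))) := by
      rw [hν, ← pushforward_density hfc.measurable hgmeas hgf (me e), heq' e,
        pushforward_density hftc.measurable hgtmeas hgtf (mt e), ← hν']
    have hmeas1 : Measurable (fun y : Fin D → ℝ =>
        ENNReal.ofReal (Real.exp (g y ⬝ᵥ me e - me e ⬝ᵥ me e / 2))) := by
      apply Measurable.ennreal_ofReal
      apply Real.measurable_exp.comp
      apply Measurable.sub_const
      have : (fun y : Fin D → ℝ => g y ⬝ᵥ me e) = (fun y => me e ⬝ᵥ g y) := by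
        funext y; exact dotProduct_comm _ _
      rw [this]; exact (measurable_dot (me e)).comp hgmeas
    have hmeas2 : Measurable (fun y : Fin D → ℝ =>
        ENNReal.ofReal (Real.exp (gt y ⬝ᵥ mt e - mt e ⬝ᵥ mt e / 2))) := by
      apply Measurable.ennreal_ofReal
      apply Real.measurable_exp.comp
      apply Measurable.sub_const
      have : (fun y : Fin D → ℝ => gt y ⬝ᵥ mt e) = (fun y => mt e ⬝ᵥ gt y) := by
        funext y; exact dotProduct_comm _ _
      rw [this]; exact (measurable_dot (mt e)).comp hgtmeas
    have haeν := (withDensity_eq_iff_of_sigmaFinite hmeas1.aemeasurable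
      hmeas2.aemeasurable).mp hwd
    have haef : ∀ᵐ z ∂(stdG dZ),
        ENNReal.ofReal (Real.exp (g (f z) ⬝ᵥ me e - me e ⬝ᵥ me e / 2))
          = ENNReal.ofReal (Real.exp (gt (f z) ⬝ᵥ mt e - mt e ⬝ᵥ mt e / 2)) := by
      rw [hν] at haeν
      exact hembf.ae_map_iff.mp haeν
    filter_upwards [haef] with z hz
    rw [hgf z] at hz
    have h2 := (ENNReal.ofReal_eq_ofReal_iff (Real.exp_pos _).le (Real.exp_pos _).le).mp hz
    exact Real.exp_eq_exp.mp h2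
  -- a.e., f z lands in the range of ftilde
  have hrange : ∀ᵐ z ∂(stdG dZ), f z ∈ Set.range ftilde := by
    have h0 : ν (Set.range ftilde)ᶜ = 0 := by
      rw [hν', Measure.map_apply hftc.measurable hembft.measurableSet_range.compl]
      simp
    have : ∀ᵐ y ∂ν, y ∈ Set.range ftilde := by
      rw [MeasureTheory.ae_iff]
      exact h0
    rw [hν] at this
    exact hembf.ae_map_iff.mp this
  -- linear algebra setup
  set V : Matrix (Fin dZ) (Fin M) ℝ := Wt * A with hV
  set U : Matrix (Fin dZ) (Fin M) ℝ := W * A with hU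
  have hVdet : IsUnit (V * Vᵀ).det := by
    have hu := isUnit_of_rank_eq (V * Vᵀ)
      (by rw [Matrix.rank_self_mul_transpose]; exact hrank)
    exact (Matrix.isUnit_iff_isUnit_det _).mp hu
  set L : Matrix (Fin dZ) (Fin M) ℝ := (V * Vᵀ)⁻¹ * V with hL
  have hLV : L * Vᵀ = 1 := by
    rw [hL, Matrix.mul_assoc]
    exact Matrix.nonsing_inv_mul _ hVdet
  set dvec : Fin M → ℝ :=
    fun j => (mt j.succ ⬝ᵥ mt j.succ - me j.succ ⬝ᵥ me j.succ) / 2 with hdvec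
  set T : Matrix (Fin dZ) (Fin dZ) ℝ := L * Uᵀ with hT
  set c : Fin dZ → ℝ := L.mulVec dvec with hc
  have hVcol : ∀ (j : Fin M) (i : Fin dZ), V i j = mt j.succ i := by
    intro j i
    rw [hV, Matrix.mul_apply, hmt]
    simp only [Matrix.mulVec, dotProduct, hA, Matrix.of_apply, Pi.sub_apply]
  have hUcol : ∀ (j : Fin M) (i : Fin dZ), U i j = me j.succ i := by
    intro j i
    rw [hU, Matrix.mul_apply, hme]
    simp only [Matrix.mulVec, dotProduct, hA, Matrix.of_apply, Pi.sub_apply]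
  -- h is a.e. equal to an affine map
  have haff : ∀ᵐ z ∂(stdG dZ), h z = T.mulVec z + c := by
    filter_upwards [hae2] with z hz
    have hcol : Vᵀ.mulVec (h z) = Uᵀ.mulVec z + dvec := by
      funext j
      have hzj := hz j.succ
      have hv : Vᵀ.mulVec (h z) j = h z ⬝ᵥ mt j.succ := by
        simp only [Matrix.mulVec, dotProduct, Matrix.transpose_apply]
        exact Finset.sum_congr rfl fun i _ => by rw [hVcol j i, mul_comm]
      have hu : Uᵀ.mulVec z j = z ⬝ᵥ me j.succ := by
        simp only [Matrix.mulVec, dotProduct, Matrix.transpose_apply]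
        exact Finset.sum_congr rfl fun i _ => by rw [hUcol j i, mul_comm]
      rw [hv]
      show _ = Uᵀ.mulVec z j + dvec j
      rw [hu, hdvec]
      dsimp only
      linarith [hzj]
    calc h z = (L * Vᵀ).mulVec (h z) := by rw [hLV, Matrix.one_mulVec]
      _ = L.mulVec (Vᵀ.mulVec (h z)) := (Matrix.mulVec_mulVec _ _ _).symm
      _ = L.mulVec (Uᵀ.mulVec z + dvec) := by rw [hcol]
      _ = L.mulVec (Uᵀ.mulVec z) + L.mulVec dvec := Matrix.mulVec_add _ _ _
      _ = T.mulVec z + c := by rw [hT, hc, Matrix.mulVec_mulVec]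
  -- transfer of the measures through the affine map
  have hmap : ∀ e, gaussianId dZ (mt e)
      = (gaussianId dZ (me e)).map (fun z => T.mulVec z + c) := by
    intro e
    have hac : gaussianId dZ (me e) ≪ stdG dZ := by
      rw [gaussianId_withDensity']
      exact withDensity_absolutelyContinuous _ _
    have hcong1 : (fun z => ftilde (h z)) =ᵐ[gaussianId dZ (me e)] f := by
      filter_upwards [hac.ae_le hrange] with z hzr
      obtain ⟨u, hu⟩ := hzr
      rw [hh]
      dsimp only
      rw [← hu, hgtf u]
    have hstep : (gaussianId dZ (mt e)).map ftilde
        = ((gaussianId dZ (me e)).map h).map ftilde := by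
      rw [← heq' e, Measure.map_map hftc.measurable hhmeas]
      exact (Measure.map_congr hcong1).symm
    have hinj : gaussianId dZ (mt e) = (gaussianId dZ (me e)).map h := by
      have h1 := congrArg (fun μ => μ.comap ftilde) hstep
      simpa only [hembft.comap_map] using h1
    rw [hinj]
    exact Measure.map_congr (hac.ae_le haff)
  -- exponential moments
  have hE : ∀ (e : Fin (M + 1)) (t : Fin dZ → ℝ),
      t ⬝ᵥ mt e + t ⬝ᵥ t / 2
        = (t ⬝ᵥ c + (Tᵀ.mulVec t ⬝ᵥ me e + Tᵀ.mulVec t ⬝ᵥ Tᵀ.mulVec t / 2)) := by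
    intro e t
    have hφmeas : Measurable (fun z : Fin dZ → ℝ => T.mulVec z + c) := by
      apply Measurable.add_const
      exact measurable_pi_iff.mpr fun i => measurable_dot _
    have h1 : ∫⁻ z, ENNReal.ofReal (Real.exp (t ⬝ᵥ z)) ∂(gaussianId dZ (mt e))
        = ENNReal.ofReal (Real.exp (t ⬝ᵥ mt e + t ⬝ᵥ t / 2)) := lintegral_exp_gaussianId _ _
    rw [hmap e, lintegral_map (measurable_expDot t) hφmeas] at h1
    have h2 : ∀ z : Fin dZ → ℝ, ENNReal.ofReal (Real.exp (t ⬝ᵥ (T.mulVec z + c)))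
        = ENNReal.ofReal (Real.exp (t ⬝ᵥ c)) * ENNReal.ofReal (Real.exp (Tᵀ.mulVec t ⬝ᵥ z)) := by
      intro z
      rw [← ENNReal.ofReal_mul (Real.exp_pos _).le, ← Real.exp_add, dotProduct_add,
        Matrix.dotProduct_mulVec, Matrix.mulVec_transpose]
      ring_nf
    simp_rw [h2] at h1
    rw [lintegral_const_mul _ (measurable_expDot _), lintegral_exp_gaussianId,
      ← ENNReal.ofReal_mul (Real.exp_pos _).le, ← Real.exp_add] at h1
    have h3 := (ENNReal.ofReal_eq_ofReal_iff (Real.exp_pos _).le (Real.exp_pos _).le).mp h1.symm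
    have h4 := Real.exp_eq_exp.mp h3
    linarith [h4]
  have hquad : ∀ t : Fin dZ → ℝ, Tᵀ.mulVec t ⬝ᵥ Tᵀ.mulVec t = t ⬝ᵥ t := by
    intro t
    have h1 := hE 0 t
    have h2 := hE 0 (-t)
    rw [hmt0, hme0] at h1 h2
    simp only [dotProduct_zero, Matrix.mulVec_neg, neg_dotProduct,
      dotProduct_neg, neg_neg] at h1 h2
    linarith
  have hvec : ∀ e, mt e = c + T.mulVec (me e) := by
    intro e
    funext i
    have h1 := hE e (Pi.single i 1)
    have h2 := hquad (Pi.single i 1)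
    have h3 : Tᵀ.mulVec (Pi.single i 1) ⬝ᵥ me e = Pi.single i 1 ⬝ᵥ T.mulVec (me e) := by
      rw [Matrix.dotProduct_mulVec (Pi.single i 1) T (me e), Matrix.mulVec_transpose]
    rw [h3] at h1
    simp only [single_dotProduct, one_mul, Pi.add_apply] at h1 h2 ⊢
    linarith
  have hc0 : c = 0 := by
    have := hvec 0
    rw [hmt0, hme0, Matrix.mulVec_zero, add_zero] at this
    exact this.symm
  have hTme : ∀ e, T.mulVec (me e) = mt e := by
    intro e
    rw [hvec e, hc0, zero_add]
  have hTU : T * U = V := by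
    ext i j
    have h1 : (T * U) i j = T.mulVec (me j.succ) i := by
      rw [Matrix.mul_apply, Matrix.mulVec, dotProduct]
      exact Finset.sum_congr rfl fun k _ => by rw [hUcol j k]
    rw [h1, hTme, hVcol j i]
  have hTT : T * Tᵀ = 1 := by
    have hS : ∀ t : Fin dZ → ℝ, t ⬝ᵥ (T * Tᵀ).mulVec t = t ⬝ᵥ t := by
      intro t
      rw [← Matrix.mulVec_mulVec, Matrix.dotProduct_mulVec, ← Matrix.mulVec_transpose]
      exact hquad t
    ext i j
    have hij := hS (Pi.single i 1 + Pi.single j 1)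
    have hii := hS (Pi.single i 1)
    have hjj := hS (Pi.single j 1)
    have hsym : (T * Tᵀ) j i = (T * Tᵀ) i j := by
      have : (T * Tᵀ)ᵀ = T * Tᵀ := by
        rw [Matrix.transpose_mul, Matrix.transpose_transpose]
      conv_lhs => rw [← this]
      exact Matrix.transpose_apply _ j i
    have expand : ∀ (u v : Fin dZ → ℝ),
        (u + v) ⬝ᵥ (T * Tᵀ).mulVec (u + v)
          = u ⬝ᵥ (T * Tᵀ).mulVec u + u ⬝ᵥ (T * Tᵀ).mulVec v
            + (v ⬝ᵥ (T * Tᵀ).mulVec u + v ⬝ᵥ (T * Tᵀ).mulVec v) := by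
      intro u v
      rw [Matrix.mulVec_add, add_dotProduct, dotProduct_add,
        dotProduct_add]
    rw [expand] at hij
    have hsingle : ∀ (k l : Fin dZ),
        Pi.single k 1 ⬝ᵥ (T * Tᵀ).mulVec (Pi.single l (1 : ℝ)) = (T * Tᵀ) k l := by
      intro k l
      rw [Matrix.mulVec_single, single_dotProduct]
      simp
    have hdd : ∀ (u v : Fin dZ → ℝ), (u + v) ⬝ᵥ (u + v)
        = u ⬝ᵥ u + u ⬝ᵥ v + (v ⬝ᵥ u + v ⬝ᵥ v) := by
      intro u v
      rw [add_dotProduct, dotProduct_add, dotProduct_add]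
    rw [hdd] at hij
    rw [hsingle i j, hsingle j i, hsingle i i, hsingle j j, hsym] at hij
    by_cases hij' : i = j
    · subst hij'
      rw [hsingle i i] at hii
      simp only [Matrix.one_apply_eq]
      have hd : Pi.single i 1 ⬝ᵥ Pi.single i (1 : ℝ) = 1 := by
        rw [single_dotProduct]
        simp
      rw [hd] at hii
      exact hii
    · rw [Matrix.one_apply_ne hij']
      have hdij : Pi.single i 1 ⬝ᵥ Pi.single j (1 : ℝ) = 0 := by
        rw [single_dotProduct]
        simp [Pi.single_apply, hij']
      have hdji : Pi.single j 1 ⬝ᵥ Pi.single i (1 : ℝ) = 0 := by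
        rw [single_dotProduct]
        simp [Pi.single_apply, Ne.symm hij']
      rw [hsingle i i] at hii
      rw [hsingle j j] at hjj
      rw [hdij, hdji] at hij
      linarith
  exact ⟨T, hTT, hTU.symm⟩



lemma cancel_right {dZ K M : ℕ} (A : Matrix (Fin K) (Fin M) ℝ) (hArank : A.rank = K)
    (X Y : Matrix (Fin dZ) (Fin K) ℝ) (h : X * A = Y * A) : X = Y := by
  have hdet : IsUnit (A * Aᵀ).det :=
    (Matrix.isUnit_iff_isUnit_det _).mp (isUnit_of_rank_eq (A * Aᵀ)
      (by rw [Matrix.rank_self_mul_transpose]; exact hArank))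
  have h2 : X * (A * Aᵀ) = Y * (A * Aᵀ) := by
    rw [← Matrix.mul_assoc, ← Matrix.mul_assoc, h]
  calc X = X * ((A * Aᵀ) * (A * Aᵀ)⁻¹) := by
        rw [Matrix.mul_nonsing_inv _ hdet, Matrix.mul_one]
    _ = Y * ((A * Aᵀ) * (A * Aᵀ)⁻¹) := by
        rw [← Matrix.mul_assoc, h2, Matrix.mul_assoc]
    _ = Y := by rw [Matrix.mul_nonsing_inv _ hdet, Matrix.mul_one]

end PMIAux

/-- **Identifiability of the perturbation matrix.**
Under the assumptions of the identifiability theorem, if additionally `A` has full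
row rank (`rank A = K ≤ M`), then the perturbation matrix is identifiable up to an
orthogonal transformation: `W̃ = O W` for some orthogonal `O`. -/


theorem perturbation_matrix_identifiability
    (dZ D K M : ℕ) (hdZ : 1 ≤ dZ) (hD : 1 ≤ D) (hK : 1 ≤ K)
    (a : Fin (M + 1) → (Fin K → ℝ))
    (A : Matrix (Fin K) (Fin M) ℝ)
    (hA : A = Matrix.of fun k (e : Fin M) => a e.succ k - a 0 k)
    (f ftilde : (Fin dZ → ℝ) → (Fin D → ℝ))
    (W Wt : Matrix (Fin dZ) (Fin K) ℝ)
    (hf : IsC2DiffeoOntoImage f) (hft : IsC2DiffeoOntoImage ftilde)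
    (heq : ∀ e : Fin (M + 1),
      (gaussianId dZ (-(W.mulVec (a 0)))).map (fun z => f (z + W.mulVec (a e))) =
        (gaussianId dZ (-(Wt.mulVec (a 0)))).map (fun z => ftilde (z + Wt.mulVec (a e))))
    (hrank : (Wt * A).rank = dZ ∨ (W * A).rank = dZ)
    (hArank : A.rank = K) (hKM : K ≤ M) :
    ∃ O : Matrix (Fin dZ) (Fin dZ) ℝ,
      O * O.transpose = 1 ∧ Wt = O * W := by
  rcases hrank with h1 | h2
  · obtain ⟨O, hO, hOA⟩ := PMIAux.aux_main dZ D K M a A hA f ftilde W Wt hf hft heq h1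
    refine ⟨O, hO, PMIAux.cancel_right A hArank Wt (O * W) ?_⟩
    rw [hOA, Matrix.mul_assoc]
  · obtain ⟨O', hO', hOA⟩ := PMIAux.aux_main dZ D K M a A hA ftilde f Wt W hft hf
      (fun e => (heq e).symm) h2
    have hOO : O'.transpose * O' = 1 := mul_eq_one_comm.mp hO'
    refine ⟨O'.transpose, by rw [Matrix.transpose_transpose]; exact hOO,
      PMIAux.cancel_right A hArank Wt (O'.transpose * W) ?_⟩
    have hkey : O'.transpose * (W * A) = Wt * A := by
      rw [hOA, ← Matrix.mul_assoc, hOO, Matrix.one_mul]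
    rw [← hkey, ← Matrix.mul_assoc]
end

section
/- Let (f, W, P) and (f̃, W̃, P̃) be two models satisfying all the assumptions of the identifiability theorem: for all e ∈ {0, ..., M}, f(Z + W a_e) is equal in distribution to f̃(Z̃ + W̃ a_e) with Z ~ P, Z̃ ~ P̃ independent; f and f̃ are C²-diffeomorphisms onto their images; P = N(−W a_0, I) and P̃ = N(−W̃ a_0, I); and rank(W̃ A) = d_Z or rank(W A) = d_Z. Let a_test ∈ ℝ^K be any vector such that a_test − a_0 lies in the linear span of {a_e − a_0 : e ∈ {1, ..., M}}. Then f(Z + W a_test) is equal in distribution to f̃(Z̃ + W̃ a_test). -/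
open MeasureTheory ProbabilityTheory

open Real Matrix
open scoped ENNReal NNReal

namespace Extrap

lemma lintegral_pi_prod : ∀ {n : ℕ} (μ : Fin n → Measure ℝ),
    (∀ i, IsProbabilityMeasure (μ i)) → ∀ (g : Fin n → ℝ → ℝ≥0∞), (∀ i, Measurable (g i)) →
    ∫⁻ x, ∏ i, g i (x i) ∂Measure.pi μ = ∏ i, ∫⁻ x, g i x ∂(μ i) := by
  intro n
  induction n with
  | zero =>
      intro μ _ g _
      simp [lintegral_one, Measure.pi_univ]
  | succ n ih =>
      intro μ hμ g hg
      haveI : ∀ i, IsProbabilityMeasure (μ i) := hμ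
      have hmp := measurePreserving_piFinSuccAbove μ 0
      have hmeas : Measurable fun y : ℝ × (Fin n → ℝ) =>
          g 0 y.1 * ∏ i : Fin n, g i.succ (y.2 i) := by
        refine (hg 0).comp measurable_fst |>.mul ?_
        exact Finset.measurable_prod _ fun i _ =>
          (hg i.succ).comp ((measurable_pi_apply i).comp measurable_snd)
      have h1 : ∫⁻ x, ∏ i, g i (x i) ∂Measure.pi μ
          = ∫⁻ y, g 0 y.1 * ∏ i : Fin n, g i.succ (y.2 i)
              ∂((μ 0).prod (Measure.pi fun i => μ ((0 : Fin (n+1)).succAbove i))) := by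
        rw [← hmp.lintegral_comp hmeas]
        congr 1
        funext x
        simp [MeasurableEquiv.piFinSuccAbove, Fin.prod_univ_succ, Fin.zero_succAbove, Fin.tail]
      rw [h1]
      simp_rw [Fin.zero_succAbove]
      rw [lintegral_prod_mul (f := g 0) (g := fun w : Fin n → ℝ => ∏ i, g i.succ (w i))
        ((hg 0).aemeasurable)
        ((Finset.measurable_prod _ fun i _ =>
          (hg i.succ).comp (measurable_pi_apply i)).aemeasurable)]
      rw [ih (fun i => μ i.succ) (fun i => hμ i.succ) (fun i => g i.succ) (fun i => hg i.succ)]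
      rw [Fin.prod_univ_succ]


lemma gaussian_density_1d (m : ℝ) :
    gaussianReal m 1 = (gaussianReal 0 1).withDensity
      (fun x => ENNReal.ofReal (rexp (x * m - m ^ 2 / 2))) := by
  rw [gaussianReal_of_var_ne_zero m one_ne_zero,
    gaussianReal_of_var_ne_zero 0 one_ne_zero,
    ← withDensity_mul _ (measurable_gaussianPDF 0 1)
      (by fun_prop : Measurable fun x => ENNReal.ofReal (rexp (x * m - m ^ 2 / 2)))]
  congr 1
  funext x
  simp only [Pi.mul_apply, gaussianPDF]
  rw [← ENNReal.ofReal_mul (gaussianPDFReal_nonneg 0 1 x)]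
  congr 1
  simp only [gaussianPDFReal, NNReal.coe_one, mul_one, sub_zero]
  rw [mul_assoc, ← Real.exp_add]
  congr 1
  rw [Real.exp_eq_exp]
  ring

lemma pi_gauss_withDensity (d : ℕ) (m : Fin d → ℝ) :
    Measure.pi (fun i => gaussianReal (m i) 1)
      = (Measure.pi fun _ : Fin d => gaussianReal 0 1).withDensity
          (fun z => ∏ i, ENNReal.ofReal (rexp (z i * m i - m i ^ 2 / 2))) := by
  apply Measure.pi_eq
  intro s hs
  set g : Fin d → ℝ → ℝ≥0∞ := fun i x => ENNReal.ofReal (rexp (x * m i - m i ^ 2 / 2)) with hgdef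
  have hgm : ∀ i, Measurable (g i) := fun i => by fun_prop
  have hbox : MeasurableSet (Set.pi Set.univ s) := MeasurableSet.univ_pi hs
  rw [withDensity_apply _ hbox, ← lintegral_indicator hbox _]
  have hind : (Set.pi Set.univ s).indicator (fun z => ∏ i, g i (z i))
      = fun z => ∏ i, (s i).indicator (g i) (z i) := by
    funext z
    by_cases hz : z ∈ Set.pi Set.univ s
    · rw [Set.indicator_of_mem hz]
      exact Finset.prod_congr rfl fun i _ =>
        (Set.indicator_of_mem (hz i (Set.mem_univ i)) _).symm
    · rw [Set.indicator_of_notMem hz]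
      rw [Set.mem_univ_pi] at hz
      push_neg at hz
      obtain ⟨i, hi⟩ := hz
      exact (Finset.prod_eq_zero (Finset.mem_univ i)
        (by rw [Set.indicator_of_notMem hi])).symm
  rw [hind, lintegral_pi_prod _ (fun _ => inferInstance) _
    (fun i => (hgm i).indicator (hs i))]
  refine Finset.prod_congr rfl fun i _ => ?_
  rw [lintegral_indicator (hs i) _, ← withDensity_apply _ (hs i), ← gaussian_density_1d]

lemma gaussianId_eq_pi (d : ℕ) (m : Fin d → ℝ) :
    gaussianId d m = Measure.pi (fun i => gaussianReal (m i) 1) := by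
  have h := measurePreserving_pi (fun _ : Fin d => gaussianReal 0 1)
    (fun i => gaussianReal (m i) 1) (f := fun i x => m i + x) ?_
  · exact h.map_eq
  · intro i
    refine ⟨measurable_const_add _, ?_⟩
    simpa using gaussianReal_map_const_add (μ := 0) (v := 1) (m i)

lemma gaussianId_zero (d : ℕ) :
    gaussianId d 0 = Measure.pi fun _ : Fin d => gaussianReal 0 1 := by
  rw [gaussianId_eq_pi]
  congr

/-- The density of `N(v, I)` with respect to `N(0, I)`. -/
noncomputable def rho (d : ℕ) (v : Fin d → ℝ) : (Fin d → ℝ) → ℝ≥0∞ :=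
  fun z => ENNReal.ofReal (rexp ((z ⬝ᵥ v) - (∑ i, v i ^ 2) / 2))

lemma rho_meas (d : ℕ) (v : Fin d → ℝ) : Measurable (rho d v) := by
  unfold rho dotProduct
  fun_prop

lemma gauss_shift (d : ℕ) (v : Fin d → ℝ) :
    gaussianId d v = (gaussianId d 0).withDensity (rho d v) := by
  rw [gaussianId_eq_pi, pi_gauss_withDensity, gaussianId_zero]
  congr 1
  funext z
  rw [← ENNReal.ofReal_prod_of_nonneg (fun i _ => (Real.exp_nonneg _))]
  unfold rho
  rw [← Real.exp_sum]
  congr 2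
  rw [Finset.sum_sub_distrib, ← Finset.sum_div]
  rfl

lemma gaussianId_map_add (d : ℕ) (m c : Fin d → ℝ) :
    (gaussianId d m).map (fun z => z + c) = gaussianId d (m + c) := by
  unfold gaussianId
  rw [Measure.map_map (measurable_add_const c) (measurable_const_add m)]
  congr 1
  funext z
  show m + z + c = m + c + z
  abel

instance gaussianId_prob (d : ℕ) (m : Fin d → ℝ) : IsProbabilityMeasure (gaussianId d m) := by
  unfold gaussianId
  exact Measure.isProbabilityMeasure_map (measurable_const_add m).aemeasurable

lemma map_withDensity_comp {α β : Type*} [MeasurableSpace α] [MeasurableSpace β]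
    (μ : Measure α) {f : α → β} (hf : Measurable f) {σ : β → ℝ≥0∞} (hσ : Measurable σ) :
    (μ.withDensity (fun x => σ (f x))).map f = (μ.map f).withDensity σ := by
  ext s hs
  rw [Measure.map_apply hf hs, withDensity_apply _ (hf hs), withDensity_apply _ hs,
    setLIntegral_map hs hσ hf]

end Extrap

namespace Extrap

lemma dot_sum {d M : ℕ} (z : Fin d → ℝ) (v : Fin M → (Fin d → ℝ)) (c : Fin M → ℝ) :
    z ⬝ᵥ (∑ e, c e • v e) = ∑ e, c e * (z ⬝ᵥ v e) := by
  simp only [dotProduct, Finset.sum_apply, Pi.smul_apply, smul_eq_mul, Finset.mul_sum]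
  rw [Finset.sum_comm]
  exact Finset.sum_congr rfl fun e _ => Finset.sum_congr rfl fun i _ => by ring

lemma rho_combine {d M : ℕ} (vv vt : Fin M → (Fin d → ℝ)) (c : Fin M → ℝ)
    (z zt : Fin d → ℝ)
    (h : ∀ e, rho d (vv e) z = rho d (vt e) zt) :
    rho d (∑ e, c e • vv e) z =
      ENNReal.ofReal (rexp (∑ e, c e * ((∑ i, (vv e) i ^ 2) / 2 - (∑ i, (vt e) i ^ 2) / 2)
        + (∑ i, (∑ e, c e • vt e) i ^ 2) / 2 - (∑ i, (∑ e, c e • vv e) i ^ 2) / 2))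
      * rho d (∑ e, c e • vt e) zt := by
  have h' : ∀ e, z ⬝ᵥ vv e - (∑ i, (vv e) i ^ 2) / 2
      = zt ⬝ᵥ vt e - (∑ i, (vt e) i ^ 2) / 2 := by
    intro e
    have := h e
    unfold rho at this
    rw [ENNReal.ofReal_eq_ofReal_iff (exp_nonneg _) (exp_nonneg _), Real.exp_eq_exp] at this
    exact this
  unfold rho
  rw [← ENNReal.ofReal_mul (exp_nonneg _), ← Real.exp_add]
  congr 1
  rw [Real.exp_eq_exp]
  rw [dot_sum z vv c, dot_sum zt vt c]
  have h2 : ∀ e ∈ Finset.univ, c e * (z ⬝ᵥ vv e)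
      = c e * (zt ⬝ᵥ vt e) + c e * ((∑ i, (vv e) i ^ 2) / 2 - (∑ i, (vt e) i ^ 2) / 2) := by
    intro e _
    linear_combination c e * h' e
  rw [Finset.sum_congr rfl h2, Finset.sum_add_distrib]
  ring

lemma rho_zero (d : ℕ) : rho d 0 = fun _ => 1 := by
  funext z
  simp [rho]

end Extrap

/-- **Extrapolation to the span of the relative perturbations.**
Under the assumptions of the identifiability theorem, for any unseen perturbation
label `a_test` with `a_test - a₀ ∈ span{a_e - a₀ : e ∈ [M]}`, the effect of `a_test`
is uniquely identified: `f(Z + W a_test)` and `f̃(Z̃ + W̃ a_test)` are equal in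
distribution. -/
theorem extrapolation_to_span
    (dZ D K M : ℕ) (hdZ : 1 ≤ dZ) (hD : 1 ≤ D) (hK : 1 ≤ K)
    (a : Fin (M + 1) → (Fin K → ℝ))
    (A : Matrix (Fin K) (Fin M) ℝ)
    (hA : A = Matrix.of fun k (e : Fin M) => a e.succ k - a 0 k)
    (f ftilde : (Fin dZ → ℝ) → (Fin D → ℝ))
    (W Wt : Matrix (Fin dZ) (Fin K) ℝ)
    (hf : IsC2DiffeoOntoImage f) (hft : IsC2DiffeoOntoImage ftilde)
    (heq : ∀ e : Fin (M + 1),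
      (gaussianId dZ (-(W.mulVec (a 0)))).map (fun z => f (z + W.mulVec (a e))) =
        (gaussianId dZ (-(Wt.mulVec (a 0)))).map (fun z => ftilde (z + Wt.mulVec (a e))))
    (hrank : (Wt * A).rank = dZ ∨ (W * A).rank = dZ)
    (atest : Fin K → ℝ)
    (hspan : atest - a 0 ∈
      Submodule.span ℝ (Set.range fun e : Fin M => a e.succ - a 0)) :
    (gaussianId dZ (-(W.mulVec (a 0)))).map (fun z => f (z + W.mulVec atest)) =
      (gaussianId dZ (-(Wt.mulVec (a 0)))).map (fun z => ftilde (z + Wt.mulVec atest)) := by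
  classical
  obtain ⟨hfC, hfinj, -⟩ := hf
  obtain ⟨hftC, hftinj, -⟩ := hft
  have hfm : Measurable f := hfC.continuous.measurable
  have hftm : Measurable ftilde := hftC.continuous.measurable
  have hemb : MeasurableEmbedding f := hfm.measurableEmbedding hfinj
  have htemb : MeasurableEmbedding ftilde := hftm.measurableEmbedding hftinj
  obtain ⟨G, hGm, hGf⟩ := hemb.exists_measurable_extend
    (measurable_id (α := Fin dZ → ℝ)) (fun _ => ⟨fun _ => 0⟩)
  obtain ⟨Gt, hGtm, hGtf⟩ := htemb.exists_measurable_extend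
    (measurable_id (α := Fin dZ → ℝ)) (fun _ => ⟨fun _ => 0⟩)
  set μ := gaussianId dZ 0 with hμdef
  -- reduction of each model measure to a density against μ.map h
  have key : ∀ (h : (Fin dZ → ℝ) → (Fin D → ℝ)), Measurable h →
      ∀ (H : (Fin D → ℝ) → (Fin dZ → ℝ)), Measurable H → (H ∘ h = id) →
      ∀ m c : Fin dZ → ℝ,
      (gaussianId dZ (-m)).map (fun z => h (z + c)) =
        (μ.map h).withDensity (fun y => Extrap.rho dZ (c - m) (H y)) := by
    intro h hm H hHm hH m c
    have h1 : (fun z => h (z + c)) = h ∘ (fun z => z + c) := rfl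
    rw [h1, ← Measure.map_map hm (measurable_add_const c), Extrap.gaussianId_map_add,
      (by abel : -m + c = c - m), Extrap.gauss_shift]
    have h2 : Extrap.rho dZ (c - m)
        = fun x => (fun y => Extrap.rho dZ (c - m) (H y)) (h x) := by
      funext x
      simp only [show H (h x) = x from congrFun hH x]
    conv_lhs => rw [h2]
    exact Extrap.map_withDensity_comp (σ := fun y => Extrap.rho dZ (c - m) (H y)) μ hm
      ((Extrap.rho_meas dZ (c - m)).comp hHm)
  have keyf := key f hfm G hGm hGf
  have keyt := key ftilde hftm Gt hGtm hGtf
  set ν := μ.map f with hνdef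
  set νt := μ.map ftilde with hνtdef
  -- e = 0 gives ν = νt
  have hν0 : ν = νt := by
    have h0 := heq 0
    rw [keyf, keyt] at h0
    simpa [sub_self, Extrap.rho_zero, withDensity_one] using h0
  -- density measurability
  have hdmeas : ∀ v : Fin dZ → ℝ, Measurable fun y => Extrap.rho dZ v (G y) :=
    fun v => (Extrap.rho_meas _ _).comp hGm
  have hdtmeas : ∀ v : Fin dZ → ℝ, Measurable fun y => Extrap.rho dZ v (Gt y) :=
    fun v => (Extrap.rho_meas _ _).comp hGtm
  -- probability measure facts
  have hprob : ∀ c : Fin K → ℝ, IsProbabilityMeasure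
      ((gaussianId dZ (-(W.mulVec (a 0)))).map (fun z => f (z + W.mulVec c))) := by
    intro c
    exact Measure.isProbabilityMeasure_map ((hfm.comp (measurable_add_const _)).aemeasurable)
  have hprobt : ∀ c : Fin K → ℝ, IsProbabilityMeasure
      ((gaussianId dZ (-(Wt.mulVec (a 0)))).map (fun z => ftilde (z + Wt.mulVec c))) := by
    intro c
    exact Measure.isProbabilityMeasure_map ((hftm.comp (measurable_add_const _)).aemeasurable)
  -- a.e. equality of densities for each observed perturbation
  have hae : ∀ e : Fin M,
      (fun y => Extrap.rho dZ (W.mulVec (a e.succ) - W.mulVec (a 0)) (G y))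
        =ᵐ[ν] fun y => Extrap.rho dZ (Wt.mulVec (a e.succ) - Wt.mulVec (a 0)) (Gt y) := by
    intro e
    have he := heq e.succ
    rw [keyf, keyt, ← hν0] at he
    refine (withDensity_eq_iff (hdmeas _).aemeasurable (hdtmeas _).aemeasurable ?_).1 he
    have : ν.withDensity (fun y => Extrap.rho dZ
        (W.mulVec (a e.succ) - W.mulVec (a 0)) (G y))
        = (gaussianId dZ (-(W.mulVec (a 0)))).map (fun z => f (z + W.mulVec (a e.succ))) :=
      (keyf _ _).symm
    have h1 : ∫⁻ y, Extrap.rho dZ (W.mulVec (a e.succ) - W.mulVec (a 0)) (G y) ∂ν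
        = ν.withDensity (fun y => Extrap.rho dZ
          (W.mulVec (a e.succ) - W.mulVec (a 0)) (G y)) Set.univ := by
      rw [withDensity_apply _ MeasurableSet.univ, setLIntegral_univ]
    rw [h1, this]
    haveI := hprob (a e.succ)
    simp [measure_univ]
  have haeAll : ∀ᵐ y ∂ν, ∀ e : Fin M,
      Extrap.rho dZ (W.mulVec (a e.succ) - W.mulVec (a 0)) (G y)
        = Extrap.rho dZ (Wt.mulVec (a e.succ) - Wt.mulVec (a 0)) (Gt y) :=
    (MeasureTheory.ae_all_iff).2 fun e => hae e
  -- span coefficients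
  rw [Submodule.mem_span_range_iff_exists_fun] at hspan
  obtain ⟨c, hc⟩ := hspan
  -- linear algebra: relative mean vectors
  have hWlin : ∀ (V : Matrix (Fin dZ) (Fin K) ℝ) (x : Fin K → ℝ),
      V.mulVec x - V.mulVec (a 0) = V.mulVecLin (x - a 0) := by
    intro V x
    rw [_root_.map_sub]
    simp [Matrix.mulVecLin_apply]
  have hsum : ∀ V : Matrix (Fin dZ) (Fin K) ℝ,
      V.mulVec atest - V.mulVec (a 0)
        = ∑ e, c e • (V.mulVec (a e.succ) - V.mulVec (a 0)) := by
    intro V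
    rw [hWlin V atest, ← hc, map_sum]
    refine Finset.sum_congr rfl fun e _ => ?_
    rw [_root_.map_smul, ← hWlin V (a e.succ)]
  -- rewrite goal through key
  rw [keyf (W.mulVec (a 0)) (W.mulVec atest), keyt (Wt.mulVec (a 0)) (Wt.mulVec atest), ← hν0, hsum W, hsum Wt]
  set k : ℝ≥0∞ := ENNReal.ofReal (rexp (∑ e, c e *
      ((∑ i, (W.mulVec (a e.succ) - W.mulVec (a 0)) i ^ 2) / 2
        - (∑ i, (Wt.mulVec (a e.succ) - Wt.mulVec (a 0)) i ^ 2) / 2)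
      + (∑ i, (∑ e, c e • (Wt.mulVec (a e.succ) - Wt.mulVec (a 0))) i ^ 2) / 2
      - (∑ i, (∑ e, c e • (W.mulVec (a e.succ) - W.mulVec (a 0))) i ^ 2) / 2)) with hkdef
  have haeComb : (fun y => Extrap.rho dZ
      (∑ e, c e • (W.mulVec (a e.succ) - W.mulVec (a 0))) (G y))
      =ᵐ[ν] fun y => k * Extrap.rho dZ
        (∑ e, c e • (Wt.mulVec (a e.succ) - Wt.mulVec (a 0))) (Gt y) := by
    filter_upwards [haeAll] with y hy
    exact Extrap.rho_combine _ _ c (G y) (Gt y) hy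
  rw [withDensity_congr_ae haeComb,
    show (fun y => k * Extrap.rho dZ
        (∑ e, c e • (Wt.mulVec (a e.succ) - Wt.mulVec (a 0))) (Gt y))
      = k • (fun y => Extrap.rho dZ
        (∑ e, c e • (Wt.mulVec (a e.succ) - Wt.mulVec (a 0))) (Gt y)) from rfl,
    withDensity_smul k (hdtmeas _)]
  -- both sides are probability measures, so k = 1
  have hk : k = 1 := by
    have hL : (ν.withDensity (fun y => Extrap.rho dZ
        (∑ e, c e • (W.mulVec (a e.succ) - W.mulVec (a 0))) (G y))) Set.univ = 1 := by
      rw [← hsum W, ← keyf (W.mulVec (a 0)) (W.mulVec atest)]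
      haveI := hprob atest
      simp [measure_univ]
    have hR : (ν.withDensity (fun y => Extrap.rho dZ
        (∑ e, c e • (Wt.mulVec (a e.succ) - Wt.mulVec (a 0))) (Gt y))) Set.univ = 1 := by
      rw [← hsum Wt, hν0, ← keyt (Wt.mulVec (a 0)) (Wt.mulVec atest)]
      haveI := hprobt atest
      simp [measure_univ]
    have := congrArg (fun m : Measure (Fin D → ℝ) => m Set.univ)
      (withDensity_congr_ae haeComb)
    rw [hL] at this
    rw [show (fun y => k * Extrap.rho dZ
        (∑ e, c e • (Wt.mulVec (a e.succ) - Wt.mulVec (a 0))) (Gt y))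
      = k • (fun y => Extrap.rho dZ
        (∑ e, c e • (Wt.mulVec (a e.succ) - Wt.mulVec (a 0))) (Gt y)) from rfl,
      withDensity_smul k (hdtmeas _)] at this
    simp only [Measure.smul_apply, smul_eq_mul, hR, mul_one] at this
    exact this.symm
  rw [hk, one_smul]
end

section
/- Let f : ℝ^{d_Z} → ℝ^D be a C²-diffeomorphism onto its image, W ∈ ℝ^{d_Z×K}, O ∈ O(d_Z) an orthogonal matrix, and W̃ ∈ ℝ^{d_Z×K} a matrix satisfying W̃ (a_e − a_0) = O W (a_e − a_0) for all e ∈ {0, ..., M}. Define f̃ : ℝ^{d_Z} → ℝ^D by f̃(z) = f(Oᵀ z). Then for every e ∈ {0, ..., M}, f(Z + W a_e) is equal in distribution to f̃(Z̃ + W̃ a_e), where Z ~ N(−W a_0, I) and Z̃ ~ N(−W̃ a_0, I). -/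
open MeasureTheory ProbabilityTheory

section AuxLemmas

open Real Matrix

/-- Fubini for lintegrals of products of single-coordinate functions. -/
lemma lintegral_pi_prod_aux : ∀ (n : ℕ) (f : Fin n → ℝ → ENNReal), (∀ i, Measurable (f i)) →
    ∫⁻ x : Fin n → ℝ, ∏ i, f i (x i) ∂(Measure.pi fun _ => (volume : Measure ℝ))
      = ∏ i, ∫⁻ x, f i x := by
  intro n
  induction n with
  | zero =>
      intro f hf
      simp [lintegral_const, Measure.pi_univ]
  | succ n ih =>
      intro f hf
      have h := measurePreserving_piFinSuccAbove (fun _ : Fin (n+1) => (volume : Measure ℝ)) 0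
      set e := MeasurableEquiv.piFinSuccAbove (fun _ : Fin (n+1) => ℝ) 0 with he
      set F : ℝ → ENNReal := f 0 with hF
      set G : (Fin n → ℝ) → ENNReal := fun v => ∏ j, f (Fin.succ j) (v j) with hGdef
      have hGm : Measurable G :=
        Finset.measurable_prod _ fun j _ => (hf (Fin.succ j)).comp (measurable_pi_apply j)
      have hGtot : Measurable fun y : ℝ × (Fin n → ℝ) => F y.1 * G y.2 :=
        ((hf 0).comp measurable_fst).mul (hGm.comp measurable_snd)
      calc ∫⁻ x : Fin (n+1) → ℝ, ∏ i, f i (x i) ∂(Measure.pi fun _ => (volume : Measure ℝ))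
          = ∫⁻ x : Fin (n+1) → ℝ, (fun y : ℝ × (Fin n → ℝ) => F y.1 * G y.2) (e x)
              ∂(Measure.pi fun _ => (volume : Measure ℝ)) := by
            refine lintegral_congr fun x => ?_
            simp [he, hGdef, hF, MeasurableEquiv.piFinSuccAbove, Fin.prod_univ_succ,
              Fin.zero_succAbove, Fin.tail]
        _ = ∫⁻ y : ℝ × (Fin n → ℝ), F y.1 * G y.2
              ∂((volume : Measure ℝ).prod (Measure.pi fun _ => (volume : Measure ℝ))) := by
            exact h.lintegral_comp hGtot
        _ = (∫⁻ x, F x) * ∫⁻ v, G v ∂(Measure.pi fun _ => (volume : Measure ℝ)) :=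
            lintegral_prod_mul (hf 0).aemeasurable hGm.aemeasurable
        _ = ∏ i, ∫⁻ x, f i x := by
            rw [ih _ fun j => hf (Fin.succ j), ← Fin.prod_univ_succ (fun i => ∫⁻ x, f i x)]

/-- The standard Gaussian product measure has density `∏ᵢ gaussianPDF 0 1 (xᵢ)` with respect
to Lebesgue measure. -/
lemma pi_gaussian_eq_withDensity (n : ℕ) :
    (Measure.pi fun _ : Fin n => gaussianReal 0 1)
      = (Measure.pi fun _ : Fin n => (volume : Measure ℝ)).withDensity
          (fun x => ∏ i, gaussianPDF 0 1 (x i)) := by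
  refine Measure.pi_eq (μ := fun _ : Fin n => gaussianReal 0 1) fun s hs => ?_
  rw [withDensity_apply _ (MeasurableSet.univ_pi hs)]
  have key : ∫⁻ x in Set.univ.pi s, ∏ i, gaussianPDF 0 1 (x i)
        ∂(Measure.pi fun _ : Fin n => (volume : Measure ℝ))
      = ∫⁻ x, ∏ i, (s i).indicator (gaussianPDF 0 1) (x i)
        ∂(Measure.pi fun _ : Fin n => (volume : Measure ℝ)) := by
    rw [← lintegral_indicator (MeasurableSet.univ_pi hs) _]
    refine lintegral_congr fun x => ?_
    by_cases hx : x ∈ Set.univ.pi s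
    · rw [Set.indicator_of_mem hx]
      refine Finset.prod_congr rfl fun i _ => ?_
      rw [Set.indicator_of_mem (hx i (Set.mem_univ i))]
    · rw [Set.indicator_of_notMem hx]
      have hex : ∃ i, x i ∉ s i := by simpa [Set.mem_pi] using hx
      obtain ⟨i, hi⟩ := hex
      exact (Finset.prod_eq_zero (Finset.mem_univ i)
        (Set.indicator_of_notMem hi (gaussianPDF 0 1))).symm
  rw [key, lintegral_pi_prod_aux n _ (fun i => (measurable_gaussianPDF 0 1).indicator (hs i))]
  refine Finset.prod_congr rfl fun i _ => ?_
  rw [gaussianReal_of_var_ne_zero 0 one_ne_zero, withDensity_apply _ (hs i),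
    lintegral_indicator (hs i) _]

/-- Pushing forward a measure with density by a measurable equivalence. -/
lemma map_withDensity_equiv {α β : Type*} [MeasurableSpace α] [MeasurableSpace β]
    (μ : Measure α) (e : α ≃ᵐ β) (ρ : α → ENNReal) (hρ : Measurable ρ) :
    (μ.withDensity ρ).map e = (μ.map e).withDensity (fun y => ρ (e.symm y)) := by
  ext s hs
  rw [Measure.map_apply e.measurable hs, withDensity_apply _ (e.measurable hs),
    withDensity_apply _ hs,
    setLIntegral_map (f := fun y => ρ (e.symm y)) hs (hρ.comp e.symm.measurable) e.measurable]
  simp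

/-- The measurable self-equivalence of `ℝ^n` given by an orthogonal matrix. -/
noncomputable def orthEquiv {n : ℕ} (Q : Matrix (Fin n) (Fin n) ℝ) (hQ : Q * Qᵀ = 1) :
    (Fin n → ℝ) ≃ᵐ (Fin n → ℝ) where
  toFun := Q.mulVec
  invFun := Qᵀ.mulVec
  left_inv := fun x => by
    rw [Matrix.mulVec_mulVec, mul_eq_one_comm.mp hQ, Matrix.one_mulVec]
  right_inv := fun x => by
    rw [Matrix.mulVec_mulVec, hQ, Matrix.one_mulVec]
  measurable_toFun := (LinearMap.continuous_on_pi (Matrix.toLin' Q)).measurable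
  measurable_invFun := (LinearMap.continuous_on_pi (Matrix.toLin' Qᵀ)).measurable

/-- Orthogonal matrices preserve the Euclidean norm. -/
lemma sum_sq_mulVec {n : ℕ} (Q : Matrix (Fin n) (Fin n) ℝ) (hQ : Qᵀ * Q = 1)
    (y : Fin n → ℝ) : ∑ i, (Q.mulVec y i)^2 = ∑ i, (y i)^2 := by
  have h1 : Q.mulVec y ⬝ᵥ Q.mulVec y = y ⬝ᵥ y := by
    rw [Matrix.dotProduct_mulVec]
    have h2 : Q.mulVec y = Matrix.vecMul y Qᵀ := by
      rw [← Matrix.mulVec_transpose, Matrix.transpose_transpose]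
    rw [h2, Matrix.vecMul_vecMul, hQ, Matrix.vecMul_one]
  simpa [dotProduct, pow_two] using h1

lemma gaussPDF_prod_eq (n : ℕ) (x : Fin n → ℝ) :
    ∏ i, gaussianPDF 0 1 (x i)
      = ENNReal.ofReal ((√(2 * π))⁻¹ ^ n * rexp (-(∑ i, (x i)^2) / 2)) := by
  simp only [gaussianPDF_def]
  rw [← ENNReal.ofReal_prod_of_nonneg (fun i _ => gaussianPDFReal_nonneg 0 1 (x i))]
  congr 1
  simp only [gaussianPDFReal, sub_zero, NNReal.coe_one, mul_one]
  rw [Finset.prod_mul_distrib, Finset.prod_const, ← Real.exp_sum, Finset.card_univ,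
    Fintype.card_fin]
  congr 1
  rw [neg_div, ← Finset.sum_div, Finset.sum_neg_distrib, neg_div]

/-- Rotation invariance of the standard Gaussian product measure. -/
lemma pi_gaussian_map_orth (n : ℕ) (Q : Matrix (Fin n) (Fin n) ℝ) (hQ : Q * Qᵀ = 1) :
    (Measure.pi fun _ : Fin n => gaussianReal 0 1).map Q.mulVec
      = Measure.pi fun _ : Fin n => gaussianReal 0 1 := by
  have hQ' : Qᵀ * Q = 1 := mul_eq_one_comm.mp hQ
  have hdet2 : Q.det * Q.det = 1 := by
    have := congrArg Matrix.det hQ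
    rwa [Matrix.det_mul, Matrix.det_transpose, Matrix.det_one] at this
  have habs : |Q.det| = 1 := by
    rcases mul_self_eq_one_iff.mp hdet2 with h | h <;> simp [h]
  have hdet : Q.det ≠ 0 := by
    intro h; rw [h] at hdet2; simpa using hdet2
  have hρ : Measurable fun x : Fin n → ℝ => ∏ i, gaussianPDF 0 1 (x i) :=
    Finset.measurable_prod _ fun i _ => (measurable_gaussianPDF 0 1).comp (measurable_pi_apply i)
  set e := orthEquiv Q hQ with he
  have hcoe : (Q.mulVec : (Fin n → ℝ) → (Fin n → ℝ)) = ⇑e := rfl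
  rw [pi_gaussian_eq_withDensity, hcoe, map_withDensity_equiv _ e _ hρ]
  have hmapvol : (Measure.pi fun _ : Fin n => (volume : Measure ℝ)).map ⇑e
      = Measure.pi fun _ : Fin n => (volume : Measure ℝ) := by
    have h1 : (⇑e : (Fin n → ℝ) → (Fin n → ℝ)) = ⇑(Matrix.toLin' Q) := by
      funext v; simp [← hcoe, Matrix.toLin'_apply]
    rw [h1, ← volume_pi, Real.map_matrix_volume_pi_eq_smul_volume_pi hdet, abs_inv, habs]
    simp
  rw [hmapvol]
  congr 1
  funext y
  have hsymm : e.symm y = Qᵀ.mulVec y := rfl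
  rw [hsymm, gaussPDF_prod_eq, gaussPDF_prod_eq,
    sum_sq_mulVec Qᵀ (by rwa [Matrix.transpose_transpose]) y]

end AuxLemmas

/-- **Converse of identifiability: the orthogonal ambiguity is unavoidable.**
If `O` is orthogonal and `W̃` satisfies `W̃ (a_e - a₀) = O W (a_e - a₀)` for all
`e ∈ {0, …, M}`, then the model with decoder `f̃(z) = f(Oᵀ z)`, perturbation matrix
`W̃`, and base distribution `N(-W̃ a₀, I)` induces the same observed distribution as
`(f, W, N(-W a₀, I))` in every environment. -/
theorem orthogonal_ambiguity_converse
    (dZ D K M : ℕ) (hdZ : 1 ≤ dZ) (hD : 1 ≤ D) (hK : 1 ≤ K)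
    (a : Fin (M + 1) → (Fin K → ℝ))
    (f : (Fin dZ → ℝ) → (Fin D → ℝ)) (hf : IsC2DiffeoOntoImage f)
    (W Wt : Matrix (Fin dZ) (Fin K) ℝ)
    (O : Matrix (Fin dZ) (Fin dZ) ℝ) (hO : O * O.transpose = 1)
    (hWt : ∀ e : Fin (M + 1),
      Wt.mulVec (a e - a 0) = O.mulVec (W.mulVec (a e - a 0)))
    (ftilde : (Fin dZ → ℝ) → (Fin D → ℝ))
    (hftilde : ∀ z, ftilde z = f (O.transpose.mulVec z)) :
    ∀ e : Fin (M + 1),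
      (gaussianId dZ (-(W.mulVec (a 0)))).map (fun z => f (z + W.mulVec (a e))) =
        (gaussianId dZ (-(Wt.mulVec (a 0)))).map
          (fun z => ftilde (z + Wt.mulVec (a e))) := by
  intro e
  have hfm : Measurable f := hf.1.continuous.measurable
  have hftm : Measurable ftilde := by
    have : ftilde = fun z => f (O.transpose.mulVec z) := funext hftilde
    rw [this]
    exact hfm.comp (LinearMap.continuous_on_pi (Matrix.toLin' O.transpose)).measurable
  have hOm : Measurable (O.transpose.mulVec : (Fin dZ → ℝ) → (Fin dZ → ℝ)) :=
    (LinearMap.continuous_on_pi (Matrix.toLin' O.transpose)).measurable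
  set π := Measure.pi fun _ : Fin dZ => gaussianReal 0 1 with hπ
  set v := W.mulVec (a e - a 0) with hv
  have hOtO : O.transpose * O = 1 := mul_eq_one_comm.mp hO
  -- LHS
  have hL : (gaussianId dZ (-(W.mulVec (a 0)))).map (fun z => f (z + W.mulVec (a e)))
      = π.map (fun z => f (z + v)) := by
    rw [gaussianId, Measure.map_map
      (g := fun z => f (z + W.mulVec (a e)))
      (hfm.comp (measurable_add_const _)) (measurable_const_add _)]
    congr 1
    funext z
    show f (-(W.mulVec (a 0)) + z + W.mulVec (a e)) = f (z + v)
    congr 1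
    rw [hv, Matrix.mulVec_sub]
    abel
  -- RHS
  have hR : (gaussianId dZ (-(Wt.mulVec (a 0)))).map (fun z => ftilde (z + Wt.mulVec (a e)))
      = π.map (fun z => f (z + v)) := by
    rw [gaussianId, Measure.map_map
      (g := fun z => ftilde (z + Wt.mulVec (a e)))
      (hftm.comp (measurable_add_const _)) (measurable_const_add _)]
    have heq : ((fun z => ftilde (z + Wt.mulVec (a e))) ∘ (fun z => -(Wt.mulVec (a 0)) + z))
        = (fun z => f (z + v)) ∘ (O.transpose.mulVec : (Fin dZ → ℝ) → (Fin dZ → ℝ)) := by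
      funext z
      show ftilde (-(Wt.mulVec (a 0)) + z + Wt.mulVec (a e)) = f (O.transpose.mulVec z + v)
      rw [hftilde]
      congr 1
      have h1 : -(Wt.mulVec (a 0)) + z + Wt.mulVec (a e) = z + Wt.mulVec (a e - a 0) := by
        rw [Matrix.mulVec_sub]; abel
      rw [h1, hWt e, Matrix.mulVec_add, Matrix.mulVec_mulVec, hOtO, Matrix.one_mulVec, hv]
    rw [heq, ← Measure.map_map (g := fun z => f (z + v)) (f := O.transpose.mulVec) (hfm.comp (measurable_add_const _)) hOm]
    have hrot : π.map (O.transpose.mulVec : (Fin dZ → ℝ) → (Fin dZ → ℝ)) = π := by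
      rw [hπ]
      exact pi_gaussian_map_orth dZ O.transpose (by rwa [Matrix.transpose_transpose])
    rw [hrot]
  rw [hL, hR]
end

section
/- Let h : ℝ^d → ℝ^d be a C¹ map, W, W̃ ∈ ℝ^{d×K}, and a_0, ..., a_M ∈ ℝ^K, and let A ∈ ℝ^{K×M} be the matrix whose columns are a_1 − a_0, ..., a_M − a_0. Suppose that for all e ∈ {0, ..., M} and all z ∈ ℝ^d: (a_e − a_0)ᵀ Wᵀ (z + W a_0) − (1/2)(a_e − a_0)ᵀ Wᵀ W (a_e + a_0) = (a_e − a_0)ᵀ W̃ᵀ (h(z) + W̃ a_0) − (1/2)(a_e − a_0)ᵀ W̃ᵀ W̃ (a_e + a_0). Then for all z ∈ ℝ^d: Aᵀ Wᵀ = Aᵀ W̃ᵀ J_h(z), where J_h(z) is the Jacobian matrix of h at z. -/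
open MeasureTheory
noncomputable def dotCLM {d : ℕ} (w : Fin d → ℝ) : (Fin d → ℝ) →L[ℝ] ℝ :=
  LinearMap.toContinuousLinearMap
    { toFun := fun z => dotProduct w z
      map_add' := fun x y => dotProduct_add w x y
      map_smul' := fun c x => by simp [dotProduct_smul] }

lemma key_jac {d : ℕ} (h : (Fin d → ℝ) → (Fin d → ℝ)) (hh : Differentiable ℝ h)
    (w w' : Fin d → ℝ) (c : ℝ)
    (hc : ∀ z, dotProduct w z - dotProduct w' (h z) = c) :
    ∀ z u, dotProduct w u = dotProduct w' (fderiv ℝ h z u) := by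
  intro z u
  have h1 : HasFDerivAt (fun z => dotProduct w' (h z))
      ((dotCLM w').comp (fderiv ℝ h z)) z :=
    (dotCLM w').hasFDerivAt.comp z (hh z).hasFDerivAt
  have hfun : (fun z => dotProduct w' (h z)) = fun z => dotProduct w z - c := by
    funext z; have := hc z; linarith
  rw [hfun] at h1
  have h2 : HasFDerivAt (fun z => dotProduct w z - c) (dotCLM w) z :=
    (dotCLM w).hasFDerivAt.sub_const c
  have := h2.unique h1
  have := congrArg (fun L => L u) this
  simpa [dotCLM] using this


/-- **From the Gaussian log-density contrast identity to the Jacobian identity.**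
Let `h : ℝ^d → ℝ^d` be `C¹` and suppose that for all environments `e ∈ {0, …, M}` and
all `z ∈ ℝ^d` the Gaussian contrast identity
`(a_e - a₀)ᵀ Wᵀ (z + W a₀) - (1/2)(a_e - a₀)ᵀ Wᵀ W (a_e + a₀)
  = (a_e - a₀)ᵀ W̃ᵀ (h(z) + W̃ a₀) - (1/2)(a_e - a₀)ᵀ W̃ᵀ W̃ (a_e + a₀)`
holds. Then `Aᵀ Wᵀ = Aᵀ W̃ᵀ J_h(z)` for all `z`, where `A` is the matrix with columns
`a_e - a₀` and `J_h(z)` is the Jacobian matrix of `h` at `z`. -/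
theorem gaussian_contrast_to_jacobian
    (d K M : ℕ) (hd : 1 ≤ d) (hK : 1 ≤ K)
    (h : (Fin d → ℝ) → (Fin d → ℝ)) (hh : ContDiff ℝ 1 h)
    (W Wt : Matrix (Fin d) (Fin K) ℝ)
    (a : Fin (M + 1) → (Fin K → ℝ))
    (A : Matrix (Fin K) (Fin M) ℝ)
    (hA : A = Matrix.of fun k (e : Fin M) => a e.succ k - a 0 k)
    (hcontrast : ∀ (e : Fin (M + 1)) (z : Fin d → ℝ),
      dotProduct (a e - a 0) (W.transpose.mulVec (z + W.mulVec (a 0))) -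
          (1 / 2) * dotProduct (a e - a 0)
            ((W.transpose * W).mulVec (a e + a 0)) =
        dotProduct (a e - a 0) (Wt.transpose.mulVec (h z + Wt.mulVec (a 0))) -
          (1 / 2) * dotProduct (a e - a 0)
            ((Wt.transpose * Wt).mulVec (a e + a 0))) :
    ∀ z : Fin d → ℝ,
      A.transpose * W.transpose =
        A.transpose * Wt.transpose *
          LinearMap.toMatrix' ((fderiv ℝ h z) : (Fin d → ℝ) →ₗ[ℝ] (Fin d → ℝ)) := by
  intro z
  ext e j
  set v : Fin K → ℝ := a e.succ - a 0 with hv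
  set w : Fin d → ℝ := W.mulVec v with hw
  set w' : Fin d → ℝ := Wt.mulVec v with hw'
  -- the contrast identity rearranged into "linear part minus composed part is constant"
  have hc : ∀ z : Fin d → ℝ, dotProduct w z - dotProduct w' (h z) =
      (1 / 2) * dotProduct v ((W.transpose * W).mulVec (a e.succ + a 0)) -
        dotProduct v (W.transpose.mulVec (W.mulVec (a 0))) +
        dotProduct v (Wt.transpose.mulVec (Wt.mulVec (a 0))) -
        (1 / 2) * dotProduct v ((Wt.transpose * Wt).mulVec (a e.succ + a 0)) := by
    intro z
    have hco := hcontrast e.succ z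
    rw [← hv] at hco
    have hWz : dotProduct w z = dotProduct v (W.transpose.mulVec z) := by
      rw [Matrix.dotProduct_mulVec, Matrix.vecMul_transpose]
    have hWtz : dotProduct w' (h z) =
        dotProduct v (Wt.transpose.mulVec (h z)) := by
      rw [Matrix.dotProduct_mulVec, Matrix.vecMul_transpose]
    simp only [Matrix.mulVec_add, dotProduct_add] at hco
    rw [hWz, hWtz]
    simp only [Matrix.mulVec_add, dotProduct_add]
    linarith
  have hkey := key_jac h (hh.differentiable one_ne_zero) w w' _ hc z
      (fun j' => if j' = j then 1 else 0)
  have hwl : dotProduct w (fun j' => if j' = j then 1 else 0) = w j := by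
    simp [dotProduct]
  rw [hwl] at hkey
  have lhs : (A.transpose * W.transpose) e j = w j := by
    simp [Matrix.mul_apply, Matrix.mulVec, dotProduct, hA, hw, hv, mul_comm]
  have rhs : (A.transpose * Wt.transpose *
      LinearMap.toMatrix' ((fderiv ℝ h z) : (Fin d → ℝ) →ₗ[ℝ] (Fin d → ℝ))) e j =
      dotProduct w' (fderiv ℝ h z (fun j' => if j' = j then 1 else 0)) := by
    have hps : (Pi.single j (1 : ℝ) : Fin d → ℝ) = fun j' => if j' = j then 1 else 0 := by
      funext j'; simp [Pi.single_apply]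
    simp [Matrix.mul_apply, Matrix.mulVec, dotProduct, hA, hw', hv,
      LinearMap.toMatrix'_apply, mul_comm, hps]
  rw [lhs, rhs, hkey]
end

section
/- Let f, f̃ : ℝ^{d_Z} → ℝ^D be C²-diffeomorphisms onto their images, let c_0, ..., c_M, c̃_0, ..., c̃_M ∈ ℝ^{d_Z} be shift vectors, and let C, C̃ ∈ ℝ^{d_Z×M} be the matrices whose columns are c_e − c_0 and c̃_e − c̃_0 for e ∈ {1, ..., M}, respectively. Suppose that for all e ∈ {0, ..., M}, f(Z + c_e) is equal in distribution to f̃(Z̃ + c̃_e), where Z ~ N(−c_0, I) and Z̃ ~ N(−c̃_0, I) are independent, and suppose rank(C̃) = d_Z or rank(C) = d_Z. Then there exists an orthogonal matrix O ∈ O(d_Z) such that f̃⁻¹ ∘ f(z) = O z for all z ∈ ℝ^{d_Z}, and C̃ = O C. -/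
open MeasureTheory ProbabilityTheory

open scoped ENNReal NNReal

namespace IdAux

open Real Set

/-- The standard Gaussian product measure on `ℝ^d`. -/
noncomputable def stdG (d : ℕ) : Measure (Fin d → ℝ) :=
  Measure.pi fun _ : Fin d => gaussianReal 0 1

instance (d : ℕ) : IsProbabilityMeasure (stdG d) := by
  unfold stdG; infer_instance

lemma lintegral_pi_prod : ∀ {d : ℕ} (ν : Fin d → Measure ℝ), (∀ i, SigmaFinite (ν i)) →
    ∀ (g : Fin d → ℝ → ℝ≥0∞), (∀ i, Measurable (g i)) →
    ∫⁻ x, ∏ i, g i (x i) ∂(Measure.pi ν) = ∏ i, ∫⁻ t, g i t ∂(ν i) := by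
  intro d
  induction d with
  | zero =>
      intro ν _ g _
      simp only [Finset.univ_eq_empty, Finset.prod_empty, lintegral_const,
        Measure.pi_empty_univ, mul_one]
  | succ n ih =>
      intro ν hν g hg
      haveI := hν
      have hmp : MeasurePreserving (MeasurableEquiv.piFinSuccAbove (fun _ : Fin (n+1) => ℝ) 0)
          (Measure.pi ν) ((ν 0).prod (Measure.pi fun j : Fin n => ν j.succ)) := by
        simpa [Fin.zero_succAbove] using measurePreserving_piFinSuccAbove ν 0
      have hcomp : ∀ x : Fin (n+1) → ℝ,
          (fun p : ℝ × (Fin n → ℝ) => g 0 p.1 * ∏ j, g j.succ (p.2 j))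
            (MeasurableEquiv.piFinSuccAbove (fun _ : Fin (n+1) => ℝ) 0 x) = ∏ i, g i (x i) := by
        intro x
        rw [Fin.prod_univ_succ]
        simp [MeasurableEquiv.piFinSuccAbove, Fin.removeNth, Fin.zero_succAbove, Fin.tail]
      have hmeas2 : Measurable fun p2 : Fin n → ℝ => ∏ j, g j.succ (p2 j) :=
        Finset.measurable_prod _ fun j _ => (hg j.succ).comp (measurable_pi_apply j)
      calc ∫⁻ x, ∏ i, g i (x i) ∂(Measure.pi ν)
          = ∫⁻ x, (fun p : ℝ × (Fin n → ℝ) => g 0 p.1 * ∏ j, g j.succ (p.2 j))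
              (MeasurableEquiv.piFinSuccAbove (fun _ : Fin (n+1) => ℝ) 0 x) ∂(Measure.pi ν) := by
            simp_rw [hcomp]
        _ = ∫⁻ p, (fun p : ℝ × (Fin n → ℝ) => g 0 p.1 * ∏ j, g j.succ (p.2 j)) p
              ∂((ν 0).prod (Measure.pi fun j : Fin n => ν j.succ)) :=
            hmp.lintegral_comp_emb (MeasurableEquiv.measurableEmbedding _)
              (fun p : ℝ × (Fin n → ℝ) => g 0 p.1 * ∏ j, g j.succ (p.2 j))
        _ = (∫⁻ t, g 0 t ∂(ν 0)) * ∫⁻ p2, ∏ j, g j.succ (p2 j)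
              ∂(Measure.pi fun j : Fin n => ν j.succ) :=
            lintegral_prod_mul (hg 0).aemeasurable hmeas2.aemeasurable
        _ = (∫⁻ t, g 0 t ∂(ν 0)) * ∏ j : Fin n, ∫⁻ t, g j.succ t ∂(ν j.succ) := by
            rw [ih (fun j => ν j.succ) (fun j => hν j.succ) (fun j => g j.succ)
              (fun j => hg j.succ)]
        _ = ∏ i, ∫⁻ t, g i t ∂(ν i) := (Fin.prod_univ_succ fun i => ∫⁻ t, g i t ∂(ν i)).symm

lemma pi_withDensity {d : ℕ} (μ : Fin d → Measure ℝ) [∀ i, SigmaFinite (μ i)]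
    (f : Fin d → ℝ → ℝ≥0∞) (hf : ∀ i, Measurable (f i))
    (hsf : ∀ i, SigmaFinite ((μ i).withDensity (f i))) :
    Measure.pi (fun i => (μ i).withDensity (f i))
      = (Measure.pi μ).withDensity (fun x => ∏ i, f i (x i)) := by
  haveI := hsf
  refine Measure.pi_eq fun s hs => ?_
  rw [withDensity_apply _ (MeasurableSet.univ_pi hs),
    ← lintegral_indicator (MeasurableSet.univ_pi hs)]
  have hind : ∀ x : Fin d → ℝ, Set.indicator (Set.pi Set.univ s)
      (fun x => ∏ i, f i (x i)) x = ∏ i, Set.indicator (s i) (f i) (x i) := by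
    intro x
    by_cases hx : x ∈ Set.pi Set.univ s
    · rw [Set.indicator_of_mem hx]
      exact Finset.prod_congr rfl fun i _ =>
        (Set.indicator_of_mem (hx i trivial) _).symm
    · rw [Set.indicator_of_notMem hx]
      obtain ⟨i, hi⟩ : ∃ i, x i ∉ s i := by
        by_contra hcon
        push_neg at hcon
        exact hx fun i _ => hcon i
      exact (Finset.prod_eq_zero (Finset.mem_univ i) (Set.indicator_of_notMem hi _)).symm
  rw [lintegral_congr hind,
    lintegral_pi_prod μ (fun i => inferInstance) _
      (fun i => (hf i).indicator (hs i))]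
  exact Finset.prod_congr rfl fun i _ => by
    rw [lintegral_indicator (hs i), withDensity_apply _ (hs i)]

lemma gaussian_shift (t : ℝ) :
    gaussianReal t 1 = (gaussianReal 0 1).withDensity
      (fun x => ENNReal.ofReal (Real.exp (t * x - t ^ 2 / 2))) := by
  have hgm : Measurable (fun x : ℝ => ENNReal.ofReal (Real.exp (t * x - t ^ 2 / 2))) := by
    apply Measurable.ennreal_ofReal
    exact Real.measurable_exp.comp (by fun_prop)
  rw [gaussianReal_of_var_ne_zero t one_ne_zero, gaussianReal_of_var_ne_zero 0 one_ne_zero,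
    ← withDensity_mul _ (measurable_gaussianPDF 0 1) hgm]
  congr 1
  funext x
  simp only [Pi.mul_apply, gaussianPDF]
  rw [← ENNReal.ofReal_mul (gaussianPDFReal_nonneg 0 1 x)]
  congr 1
  unfold gaussianPDFReal
  push_cast
  simp only [mul_one, sub_zero]
  rw [mul_assoc, ← Real.exp_add]
  congr 1
  ring

/-- Density of the Gaussian shifted by `b` with respect to the standard Gaussian. -/
noncomputable def shiftDens {d : ℕ} (b : Fin d → ℝ) (x : Fin d → ℝ) : ℝ≥0∞ :=
  ENNReal.ofReal (Real.exp (dotProduct b x - dotProduct b b / 2))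

lemma measurable_shiftDens {d : ℕ} (b : Fin d → ℝ) : Measurable (shiftDens b) := by
  apply Measurable.ennreal_ofReal
  apply Real.measurable_exp.comp
  exact (Finset.measurable_sum _ fun i _ =>
    (measurable_pi_apply i).const_mul _).sub measurable_const

lemma stdG_map_add {d : ℕ} (b : Fin d → ℝ) :
    (stdG d).map (fun x => x + b) = (stdG d).withDensity (shiftDens b) := by
  have hfm : ∀ i : Fin d, Measurable fun x : ℝ =>
      ENNReal.ofReal (Real.exp (b i * x - (b i) ^ 2 / 2)) := fun i => by
    apply Measurable.ennreal_ofReal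
    exact Real.measurable_exp.comp (by fun_prop)
  have h1 : (stdG d).map (fun x => x + b)
      = Measure.pi fun i : Fin d => gaussianReal (b i) 1 := by
    have hmp := measurePreserving_pi (fun _ : Fin d => gaussianReal (0:ℝ) 1)
      (fun i => gaussianReal (b i) 1) (f := fun i (x : ℝ) => x + b i)
      (fun i => ⟨measurable_id.add_const _, by
        simpa using gaussianReal_map_add_const (μ := 0) (v := 1) (b i)⟩)
    exact hmp.map_eq
  haveI hsf : ∀ i : Fin d, SigmaFinite ((gaussianReal (0:ℝ) 1).withDensity
      (fun x => ENNReal.ofReal (Real.exp (b i * x - (b i) ^ 2 / 2)))) := by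
    intro i; rw [← gaussian_shift (b i)]; infer_instance
  rw [h1]
  have h3 : (fun i : Fin d => gaussianReal (b i) 1)
      = fun i => (gaussianReal (0:ℝ) 1).withDensity
          (fun x => ENNReal.ofReal (Real.exp (b i * x - (b i) ^ 2 / 2))) :=
    funext fun i => gaussian_shift (b i)
  rw [h3, pi_withDensity _ _ hfm hsf]
  congr 1
  funext x
  rw [← ENNReal.ofReal_prod_of_nonneg (fun i _ => (Real.exp_pos _).le), ← Real.exp_sum]
  unfold shiftDens dotProduct
  congr 1
  rw [Real.exp_eq_exp]
  have h5 : ∀ i ∈ (Finset.univ : Finset (Fin d)), b i * x i - b i ^ 2 / 2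
      = b i * x i - b i * b i / 2 := fun i _ => by ring
  rw [Finset.sum_congr rfl h5, Finset.sum_sub_distrib, ← Finset.sum_div]

/-- Density of the standard Gaussian with respect to Lebesgue measure. -/
noncomputable def stdDens {d : ℕ} (x : Fin d → ℝ) : ℝ≥0∞ := ∏ i, gaussianPDF 0 1 (x i)

lemma measurable_stdDens {d : ℕ} : Measurable (stdDens (d := d)) :=
  Finset.measurable_prod _ fun i _ => (measurable_gaussianPDF 0 1).comp (measurable_pi_apply i)

lemma continuous_gaussianPDFReal : Continuous (gaussianPDFReal 0 1) := by
  unfold gaussianPDFReal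
  fun_prop

lemma stdDens_eq {d : ℕ} (z : Fin d → ℝ) :
    stdDens z = ENNReal.ofReal (∏ i, gaussianPDFReal 0 1 (z i)) := by
  rw [ENNReal.ofReal_prod_of_nonneg fun i _ => gaussianPDFReal_nonneg 0 1 (z i)]
  rfl

lemma continuous_stdDens {d : ℕ} : Continuous (stdDens (d := d)) := by
  have h : stdDens (d := d) = fun z => ENNReal.ofReal (∏ i, gaussianPDFReal 0 1 (z i)) :=
    funext stdDens_eq
  rw [h]
  exact ENNReal.continuous_ofReal.comp (continuous_finset_prod _ fun i _ =>
    continuous_gaussianPDFReal.comp (continuous_apply i))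

lemma stdG_eq_withDensity (d : ℕ) :
    stdG d = (volume : Measure (Fin d → ℝ)).withDensity stdDens := by
  have hsf : ∀ _i : Fin d, SigmaFinite ((volume : Measure ℝ).withDensity (gaussianPDF 0 1)) :=
    fun _i => by
      rw [← gaussianReal_of_var_ne_zero 0 one_ne_zero]; infer_instance
  unfold stdG
  have h : (fun _ : Fin d => gaussianReal (0:ℝ) 1)
      = fun _ => (volume : Measure ℝ).withDensity (gaussianPDF 0 1) :=
    funext fun _ => gaussianReal_of_var_ne_zero 0 one_ne_zero
  rw [h, MeasureTheory.volume_pi]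
  exact pi_withDensity (fun _ => (volume : Measure ℝ)) _ (fun _ => measurable_gaussianPDF 0 1) hsf

lemma volume_ac_stdG (d : ℕ) : (volume : Measure (Fin d → ℝ)) ≪ stdG d := by
  rw [stdG_eq_withDensity]
  refine withDensity_absolutelyContinuous' measurable_stdDens.aemeasurable ?_
  refine ae_of_all _ fun x => ?_
  unfold stdDens
  rw [Finset.prod_ne_zero_iff]
  exact fun i _ => (gaussianPDF_pos 0 one_ne_zero (x i)).ne'

lemma map_withDensity_comp {α β : Type*} [MeasurableSpace α] [MeasurableSpace β]
    (μ : Measure α) {h : α → β} (hm : Measurable h) {g : β → ℝ≥0∞} (hg : Measurable g) :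
    (μ.withDensity (fun x => g (h x))).map h = (μ.map h).withDensity g := by
  ext S hS
  rw [Measure.map_apply hm hS, withDensity_apply _ hS, withDensity_apply _ (hm hS),
    setLIntegral_map hS hg hm]

lemma measure_eq_of_map_eq {d : ℕ} {α β : Measure (Fin d → ℝ)}
    {h : (Fin d → ℝ) → (Fin d → ℝ)} (hm : Measurable h) {A : Set (Fin d → ℝ)}
    (hA : MeasurableSet A) (hinj : Set.InjOn h A) (hαA : α Aᶜ = 0) (hβA : β Aᶜ = 0)
    (hmap : α.map h = β.map h) : α = β := by
  ext S hS
  have him : MeasurableSet (h '' (S ∩ A)) :=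
    (hS.inter hA).image_of_measurable_injOn hm (hinj.mono Set.inter_subset_right)
  have key : ∀ γ : Measure (Fin d → ℝ), γ Aᶜ = 0 → γ S = (γ.map h) (h '' (S ∩ A)) := by
    intro γ hγ
    rw [Measure.map_apply hm him]
    have hnull : ∀ t : Set (Fin d → ℝ), γ (t ∩ Aᶜ) = 0 :=
      fun t => measure_mono_null Set.inter_subset_right hγ
    have h1 : γ S = γ (S ∩ A) := by
      have := measure_inter_add_diff S hA (μ := γ)
      have h2 : γ (S \ A) = 0 := by
        rw [Set.diff_eq]; exact hnull S
      rw [← this, h2, add_zero]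
    have hpre : h ⁻¹' (h '' (S ∩ A)) ∩ A = S ∩ A := by
      apply Set.Subset.antisymm
      · rintro x ⟨hx1, hx2⟩
        obtain ⟨y, hy, hyx⟩ := hx1
        rwa [← hinj hy.2 hx2 hyx]
      · exact fun x hx => ⟨Set.mem_preimage.mpr (Set.mem_image_of_mem h hx), hx.2⟩
    have h3 : γ (h ⁻¹' (h '' (S ∩ A))) = γ (h ⁻¹' (h '' (S ∩ A)) ∩ A) := by
      have := measure_inter_add_diff (h ⁻¹' (h '' (S ∩ A))) hA (μ := γ)
      have h2 : γ (h ⁻¹' (h '' (S ∩ A)) \ A) = 0 := by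
        rw [Set.diff_eq]; exact hnull _
      rw [← this, h2, add_zero]
    rw [h3, hpre, h1]
  rw [key α hαA, key β hβA, hmap]

lemma matrix_eq_of_mulVec_eq {m n : ℕ} {A B : Matrix (Fin m) (Fin n) ℝ}
    (h : ∀ x, A.mulVec x = B.mulVec x) : A = B := by
  ext j k
  have := congrFun (h (Pi.single k 1)) j
  simpa [Matrix.mulVec_single] using this

lemma transpose_mul_self_eq_one {n : ℕ} {L : Matrix (Fin n) (Fin n) ℝ}
    (h : ∀ y : Fin n → ℝ, dotProduct (L.mulVec y) (L.mulVec y)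
      = dotProduct y y) :
    L.transpose * L = 1 := by
  have hbil : ∀ y z : Fin n → ℝ,
      dotProduct (L.mulVec y) (L.mulVec z) = dotProduct y z := by
    intro y z
    have h1 := h (y + z)
    simp only [Matrix.mulVec_add, add_dotProduct, dotProduct_add] at h1
    have h2 := h y
    have h3 := h z
    have h4 := dotProduct_comm (L.mulVec y) (L.mulVec z)
    have h5 := dotProduct_comm y z
    linarith
  ext j k
  have hjk := hbil (Pi.single j 1) (Pi.single k 1)
  simp only [Matrix.mulVec_single, mul_one, MulOpposite.op_one, one_smul] at hjk
  simp only [Matrix.mul_apply, Matrix.transpose_apply, Matrix.one_apply]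
  rw [show (∑ i, L i j * L i k)
      = dotProduct (L.col j) (L.col k) from rfl, hjk]
  rcases eq_or_ne j k with rfl | hne
  · simp [dotProduct, Pi.single_apply]
  · simp [dotProduct, Pi.single_apply, hne, hne.symm]

lemma rank_surjective {dZ M : ℕ} {A : Matrix (Fin dZ) (Fin M) ℝ} (h : A.rank = dZ) :
    LinearMap.range A.mulVecLin = ⊤ := by
  apply Submodule.eq_top_of_finrank_eq
  rw [show Module.finrank ℝ (LinearMap.range A.mulVecLin) = A.rank from rfl, h]
  simp

end IdAux

open IdAux Real Set

/-- Main auxiliary lemma: the identifiability statement assuming `Ct` has full rank. -/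
theorem identifiability_aux
    (dZ D M : ℕ)
    (c ct : Fin (M + 1) → (Fin dZ → ℝ))
    (C Ct : Matrix (Fin dZ) (Fin M) ℝ)
    (hC : C = Matrix.of fun j (e : Fin M) => c e.succ j - c 0 j)
    (hCt : Ct = Matrix.of fun j (e : Fin M) => ct e.succ j - ct 0 j)
    (f ftilde : (Fin dZ → ℝ) → (Fin D → ℝ))
    (hf : IsC2DiffeoOntoImage f) (hft : IsC2DiffeoOntoImage ftilde)
    (heq : ∀ e : Fin (M + 1),
      (gaussianId dZ (-(c 0))).map (fun z => f (z + c e)) =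
        (gaussianId dZ (-(ct 0))).map (fun z => ftilde (z + ct e)))
    (hrank : Ct.rank = dZ) :
    ∃ O : Matrix (Fin dZ) (Fin dZ) ℝ,
      O * O.transpose = 1 ∧
      (∀ z : Fin dZ → ℝ, f z = ftilde (O.mulVec z)) ∧
      Ct = O * C := by
  classical
  obtain ⟨hf2, hfinj, g, hgf, -⟩ := hf
  obtain ⟨hft2, hftinj, gt, hgtft, -⟩ := hft
  have hfc : Continuous f := hf2.continuous
  have hftc : Continuous ftilde := hft2.continuous
  have hfm : Measurable f := hfc.measurable
  have hftm : Measurable ftilde := hftc.measurable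
  have ftemb : MeasurableEmbedding ftilde := hftc.measurableEmbedding hftinj
  set γ := stdG dZ with hγdef
  set b : Fin (M + 1) → Fin dZ → ℝ := fun e => c e - c 0 with hbdef
  set bt : Fin (M + 1) → Fin dZ → ℝ := fun e => ct e - ct 0 with hbtdef
  -- reduce heq to statements about the standard Gaussian
  have hmap_shift : ∀ (F : (Fin dZ → ℝ) → (Fin D → ℝ)) (hF : Measurable F)
      (m : Fin (M+1) → Fin dZ → ℝ) (e : Fin (M+1)),
      (gaussianId dZ (-(m 0))).map (fun z => F (z + m e))
        = γ.map (fun z => F (z + (m e - m 0))) := by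
    intro F hF m e
    unfold gaussianId
    have hg1 : Measurable fun z : Fin dZ → ℝ => F (z + m e) := hF.comp (measurable_add_const _)
    have hg2 : Measurable fun z : Fin dZ → ℝ => -(m 0) + z := measurable_const_add _
    rw [Measure.map_map hg1 hg2]
    congr 1
    funext z
    have : -(m 0) + z + m e = z + (m e - m 0) := by abel
    simp only [Function.comp_apply, this]
  have heq' : ∀ e, γ.map (fun z => f (z + b e)) = γ.map (fun z => ftilde (z + bt e)) := by
    intro e
    rw [hbdef, hbtdef, ← hmap_shift f hfm c e, ← hmap_shift ftilde hftm ct e]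
    exact heq e
  set μ : Fin (M + 1) → Measure (Fin dZ → ℝ) := fun e => γ.map (fun x => x + b e) with hμdef
  set μt : Fin (M + 1) → Measure (Fin dZ → ℝ) := fun e => γ.map (fun x => x + bt e) with hμtdef
  have hμf : ∀ e, (μ e).map f = γ.map (fun z => f (z + b e)) := by
    intro e
    rw [hμdef, Measure.map_map hfm (measurable_add_const (b e))]
    rfl
  have hμtf : ∀ e, (μt e).map ftilde = γ.map (fun z => ftilde (z + bt e)) := by
    intro e
    rw [hμtdef, Measure.map_map hftm (measurable_add_const (bt e))]
    rfl
  have hb0 : b 0 = 0 := sub_self _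
  have hbt0 : bt 0 = 0 := sub_self _
  have hμ0 : μ 0 = γ := by
    rw [hμdef]; simp only [hb0, add_zero]
    exact Measure.map_id
  have hμt0 : μt 0 = γ := by
    rw [hμtdef]; simp only [hbt0, add_zero]
    exact Measure.map_id
  -- the measurable partial inverse of ftilde
  set E : Set (Fin D → ℝ) := Set.range ftilde with hEdef
  have hEm : MeasurableSet E := ftemb.measurableSet_range
  set q : (Fin D → ℝ) → (Fin dZ → ℝ) := fun y => if y ∈ E then gt y else 0 with hqdef
  have hqft : ∀ u, q (ftilde u) = u := by
    intro u
    have hmem : ftilde u ∈ E := ⟨u, rfl⟩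
    show (if ftilde u ∈ E then gt (ftilde u) else 0) = u
    rw [if_pos hmem]
    exact hgtft u
  have hqm : Measurable q := by
    intro S hS
    have hpre : q ⁻¹' S = (ftilde '' S) ∪ (Eᶜ ∩ (if (0 : Fin dZ → ℝ) ∈ S then Set.univ else ∅)) := by
      ext y
      by_cases hy : y ∈ E
      · obtain ⟨u, rfl⟩ := hy
        simp only [Set.mem_preimage, hqft, Set.mem_union, Set.mem_inter_iff, Set.mem_compl_iff]
        constructor
        · intro hu; exact Or.inl ⟨u, hu, rfl⟩
        · rintro (⟨w, hw, hwu⟩ | ⟨hc, -⟩)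
          · rwa [← hftinj hwu]
          · exact absurd ⟨u, rfl⟩ hc
      · have hq0 : q y = 0 := by rw [hqdef]; exact if_neg hy
        simp only [Set.mem_preimage, hq0, Set.mem_union, Set.mem_inter_iff, Set.mem_compl_iff]
        constructor
        · intro h0; right; refine ⟨hy, ?_⟩; rw [if_pos h0]; trivial
        · rintro (⟨w, -, hwy⟩ | ⟨-, hmem⟩)
          · exact absurd ⟨w, hwy⟩ hy
          · by_cases h0 : (0 : Fin dZ → ℝ) ∈ S
            · exact h0
            · rw [if_neg h0] at hmem; exact absurd hmem (Set.notMem_empty y)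
    rw [hpre]
    refine (ftemb.measurableSet_image' hS).union (hEm.compl.inter ?_)
    split <;> simp
  set h : (Fin dZ → ℝ) → (Fin dZ → ℝ) := fun x => q (f x) with hhdef
  have hhm : Measurable h := hqm.comp hfm
  set A : Set (Fin dZ → ℝ) := f ⁻¹' E with hAdef
  have hAm : MeasurableSet A := hfm hEm
  have hfA : ∀ x ∈ A, ftilde (h x) = f x := by
    intro x hx
    obtain ⟨u, hu⟩ := hx
    have : h x = u := by rw [hhdef]; simp only [← hu, hqft]
    rw [this, hu]
  have hinjA : Set.InjOn h A := by
    intro x hx y hy hxy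
    apply hfinj
    rw [← hfA x hx, ← hfA y hy, hxy]
  -- pushforward identities
  have hmaph : ∀ e, (μ e).map h = μt e := by
    intro e
    have h1 : (μ e).map h = ((μ e).map f).map q := (Measure.map_map hqm hfm).symm
    rw [h1, hμf e, heq' e, ← hμtf e, Measure.map_map hqm hftm]
    have h2 : q ∘ ftilde = id := funext hqft
    rw [h2, Measure.map_id]
  have hγh : γ.map h = γ := by
    have := hmaph 0
    rwa [hμ0, hμt0] at this
  -- A has full measure
  have hAfull : γ Aᶜ = 0 := by
    have h1 : γ A = 1 := by
      have h2 : γ A = (γ.map f) E := (Measure.map_apply hfm hEm).symm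
      have h3 : γ.map f = (μt 0).map ftilde := by
        rw [← hμ0, hμf 0, heq' 0, hμtf 0]
      rw [h2, h3, Measure.map_apply hftm hEm]
      have h4 : ftilde ⁻¹' E = Set.univ :=
        Set.eq_univ_of_forall fun u => Set.mem_range_self u
      rw [h4, hμt0]
      exact measure_univ
    rw [measure_compl hAm (measure_ne_top γ A), h1, measure_univ, tsub_self]
  -- density identities
  have hdens : ∀ e, μ e = γ.withDensity (shiftDens (b e)) := fun e => stdG_map_add (b e)
  have hdenst : ∀ e, μt e = γ.withDensity (shiftDens (bt e)) := fun e => stdG_map_add (bt e)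
  have hkey : ∀ e, shiftDens (b e) =ᵐ[γ] fun x => shiftDens (bt e) (h x) := by
    intro e
    have h1 : (γ.withDensity (fun x => shiftDens (bt e) (h x))).map h
        = γ.withDensity (shiftDens (bt e)) := by
      rw [map_withDensity_comp γ hhm (measurable_shiftDens (bt e)), hγh]
    have h2 : (γ.withDensity (shiftDens (b e))).map h
        = (γ.withDensity (fun x => shiftDens (bt e) (h x))).map h := by
      rw [h1, ← hdens e, hmaph e, hdenst e]
    have hnullα : γ.withDensity (shiftDens (b e)) Aᶜ = 0 := by
      rw [withDensity_apply _ hAm.compl, Measure.restrict_eq_zero.mpr hAfull,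
        lintegral_zero_measure]
    have hnullβ : γ.withDensity (fun x => shiftDens (bt e) (h x)) Aᶜ = 0 := by
      rw [withDensity_apply _ hAm.compl, Measure.restrict_eq_zero.mpr hAfull,
        lintegral_zero_measure]
    have h3 : γ.withDensity (shiftDens (b e))
        = γ.withDensity (fun x => shiftDens (bt e) (h x)) :=
      measure_eq_of_map_eq hhm hAm hinjA hnullα hnullβ h2
    exact (withDensity_eq_iff_of_sigmaFinite (measurable_shiftDens (b e)).aemeasurable
      ((measurable_shiftDens (bt e)).comp hhm).aemeasurable).mp h3
  -- extract the pointwise a.e. statement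
  have hae : ∀ᵐ x ∂γ, x ∈ A ∧ ∀ e : Fin (M + 1),
      shiftDens (b e) x = shiftDens (bt e) (h x) := by
    have h1 : ∀ᵐ x ∂γ, x ∈ A := by
      have hc : {x | ¬ x ∈ A} = Aᶜ := rfl
      rw [ae_iff, hc]
      exact hAfull
    have h2 : ∀ᵐ x ∂γ, ∀ e : Fin (M + 1), shiftDens (b e) x = shiftDens (bt e) (h x) :=
      ae_all_iff.mpr hkey
    filter_upwards [h1, h2] with x hx1 hx2 using ⟨hx1, hx2⟩
  -- turn density equality into inner-product equality
  have hdot : ∀ᵐ x ∂γ, x ∈ A ∧ ∀ e : Fin (M + 1),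
      dotProduct (bt e) (h x)
        = dotProduct (b e) x + (dotProduct (bt e) (bt e) / 2
            - dotProduct (b e) (b e) / 2) := by
    filter_upwards [hae] with x ⟨hxA, hx⟩
    refine ⟨hxA, fun e => ?_⟩
    have := hx e
    unfold shiftDens at this
    rw [ENNReal.ofReal_eq_ofReal_iff (Real.exp_pos _).le (Real.exp_pos _).le] at this
    have := Real.exp_injective this
    linarith
  -- matrices acting by dot products with the columns
  set κ : Fin M → ℝ := fun e => dotProduct (bt e.succ) (bt e.succ) / 2
    - dotProduct (b e.succ) (b e.succ) / 2 with hκdef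
  have hCmul : ∀ y : Fin dZ → ℝ, C.transpose.mulVec y
      = fun e : Fin M => dotProduct (b e.succ) y := by
    intro y; funext e
    simp only [Matrix.mulVec, dotProduct, Matrix.transpose_apply, hC, Matrix.of_apply,
      hbdef, Pi.sub_apply]
  have hCtmul : ∀ y : Fin dZ → ℝ, Ct.transpose.mulVec y
      = fun e : Fin M => dotProduct (bt e.succ) y := by
    intro y; funext e
    simp only [Matrix.mulVec, dotProduct, Matrix.transpose_apply, hCt, Matrix.of_apply,
      hbtdef, Pi.sub_apply]
  -- left inverse of Ctᵀ
  obtain ⟨R, hR⟩ := LinearMap.exists_rightInverse_of_surjective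
    Ct.mulVecLin (rank_surjective hrank)
  set P : Matrix (Fin M) (Fin dZ) ℝ := LinearMap.toMatrix' R with hPdef
  have hCtP : Ct * P = 1 := by
    apply Matrix.toLin'.injective
    rw [Matrix.toLin'_mul, Matrix.toLin'_one, hPdef, Matrix.toLin'_toMatrix',
      Matrix.toLin'_apply']
    exact hR
  have hPCt : P.transpose * Ct.transpose = 1 := by
    rw [← Matrix.transpose_mul, hCtP, Matrix.transpose_one]
  set L : Matrix (Fin dZ) (Fin dZ) ℝ := P.transpose * C.transpose with hLdef
  set v : Fin dZ → ℝ := P.transpose.mulVec κ with hvdef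
  set T : (Fin dZ → ℝ) → (Fin dZ → ℝ) := fun x => L.mulVec x + v with hTdef
  have hTcont : Continuous T := by
    have h1 : Continuous fun x : Fin dZ → ℝ => L.mulVec x := by
      have := LinearMap.continuous_on_pi L.mulVecLin
      exact this
    exact h1.add continuous_const
  have hTm : Measurable T := hTcont.measurable
  -- a.e. h = T and f = ftilde ∘ T
  have haeT : ∀ᵐ x ∂γ, h x = T x ∧ f x = ftilde (T x)
      ∧ Ct.transpose.mulVec (T x) = C.transpose.mulVec x + κ := by
    filter_upwards [hdot] with x ⟨hxA, hx⟩
    have hrel : Ct.transpose.mulVec (h x) = C.transpose.mulVec x + κ := by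
      rw [hCtmul, hCmul]
      funext e
      simp only [Pi.add_apply]
      exact hx e.succ
    have hT : h x = T x := by
      have h1 : P.transpose.mulVec (Ct.transpose.mulVec (h x)) = h x := by
        rw [Matrix.mulVec_mulVec, hPCt, Matrix.one_mulVec]
      rw [← h1, hrel, Matrix.mulVec_add, Matrix.mulVec_mulVec, ← hLdef, ← hvdef, hTdef]
    refine ⟨hT, ?_, by rw [← hT]; exact hrel⟩
    rw [← hT]
    exact (hfA x hxA).symm
  have hT_ae : h =ᵐ[γ] T := by filter_upwards [haeT] with x hx using hx.1
  have hmapT : γ.map T = γ := by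
    rw [← Measure.map_congr hT_ae]
    exact hγh
  -- L is invertible
  have hdet : L.det ≠ 0 := by
    intro h0
    have hnotsurj : ¬ Function.Surjective L.mulVec := by
      rw [Matrix.mulVec_surjective_iff_isUnit]
      intro hu
      have := Matrix.isUnit_iff_isUnit_det L |>.mp hu
      rw [h0] at this
      exact (not_isUnit_zero : ¬ IsUnit (0:ℝ)) this
    have : ¬ ∀ z, ∃ x, L.mulVec x = z := hnotsurj
    push_neg at this
    obtain ⟨y, hy⟩ := this
    set W : Submodule ℝ (Fin dZ → ℝ) := LinearMap.range L.mulVecLin with hWdef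
    have hWclosed : IsClosed (W : Set (Fin dZ → ℝ)) := Submodule.closed_of_finiteDimensional W
    set Wc : Set (Fin dZ → ℝ) := (fun w => w + v) '' (W : Set (Fin dZ → ℝ)) with hWcdef
    have hWc_closed : IsClosed Wc := (Homeomorph.addRight v).isClosedMap _ hWclosed
    have hWc_mem : ∀ x, T x ∈ Wc := by
      intro x
      exact ⟨L.mulVec x, ⟨x, rfl⟩, rfl⟩
    have hγWc : γ Wc = 1 := by
      rw [← hmapT, Measure.map_apply hTm hWc_closed.measurableSet]
      have : T ⁻¹' Wc = Set.univ := Set.eq_univ_of_forall fun x => hWc_mem x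
      rw [this]
      exact measure_univ
    have hγWcc : γ Wcᶜ = 0 := by
      rw [measure_compl hWc_closed.measurableSet (measure_ne_top γ _), hγWc, measure_univ,
        tsub_self]
    have hvolWcc : (volume : Measure (Fin dZ → ℝ)) Wcᶜ = 0 := volume_ac_stdG dZ hγWcc
    have hopen : IsOpen Wcᶜ := hWc_closed.isOpen_compl
    have hne : Wcᶜ.Nonempty := by
      refine ⟨y + v, ?_⟩
      rintro ⟨w, hw, hwv⟩
      have hwy : w = y := by
        have := hwv
        simpa using add_right_cancel this
      rw [hwy] at hw
      obtain ⟨x, hx⟩ := hw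
      exact hy x hx
    exact (hopen.measure_pos volume hne).ne' hvolWcc
  have hunit : IsUnit L.det := isUnit_iff_ne_zero.mpr hdet
  have hLiL : L⁻¹ * L = 1 := Matrix.nonsing_inv_mul L hunit
  have hLLi : L * L⁻¹ = 1 := Matrix.mul_nonsing_inv L hunit
  set Tinv : (Fin dZ → ℝ) → (Fin dZ → ℝ) := fun y => L⁻¹.mulVec (y - v) with hTinvdef
  have hTinvT : ∀ x, Tinv (T x) = x := by
    intro x
    rw [hTinvdef, hTdef]
    simp only [add_sub_cancel_right, Matrix.mulVec_mulVec, hLiL, Matrix.one_mulVec]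
  have hTinvcont : Continuous Tinv := by
    have h1 : Continuous fun y : Fin dZ → ℝ => L⁻¹.mulVec y :=
      LinearMap.continuous_on_pi L⁻¹.mulVecLin
    exact h1.comp (continuous_id.sub continuous_const)
  have hTinvm : Measurable Tinv := hTinvcont.measurable
  -- push Lebesgue measure through T
  have hsTm : Measurable fun y : Fin dZ → ℝ => stdDens (Tinv y) :=
    measurable_stdDens.comp hTinvm
  have hvolT : (volume : Measure (Fin dZ → ℝ)).map T
      = (ENNReal.ofReal |L.det⁻¹|) • (volume : Measure (Fin dZ → ℝ)) := by
    have h1 : (volume : Measure (Fin dZ → ℝ)).map T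
        = ((volume : Measure (Fin dZ → ℝ)).map (fun x => L.mulVec x)).map (fun y => y + v) := by
      have hm1 : Measurable fun y : Fin dZ → ℝ => y + v := measurable_add_const v
      have hm2 : Measurable fun x : Fin dZ → ℝ => L.mulVec x :=
        (LinearMap.continuous_on_pi L.mulVecLin).measurable
      rw [Measure.map_map hm1 hm2]
      rfl
    have h2 : (volume : Measure (Fin dZ → ℝ)).map (fun x => L.mulVec x)
        = (ENNReal.ofReal |L.det⁻¹|) • (volume : Measure (Fin dZ → ℝ)) := by
      have := Real.map_matrix_volume_pi_eq_smul_volume_pi (M := L) hdet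
      exact this
    rw [h1, h2, Measure.map_smul, map_add_right_eq_self (volume : Measure (Fin dZ → ℝ)) v]
  -- density comparison
  have hstd : (volume : Measure (Fin dZ → ℝ)).withDensity stdDens
      = (volume : Measure (Fin dZ → ℝ)).withDensity
          (fun x => ENNReal.ofReal |L.det⁻¹| * stdDens (Tinv x)) := by
    have h3 := map_withDensity_comp (volume : Measure (Fin dZ → ℝ)) hTm
      (g := fun y => stdDens (Tinv y)) hsTm
    have h4 : (fun x => stdDens (Tinv (T x))) = stdDens (d := dZ) :=
      funext fun x => by rw [hTinvT]
    rw [h4] at h3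
    calc (volume : Measure (Fin dZ → ℝ)).withDensity stdDens
        = γ := (stdG_eq_withDensity dZ).symm
      _ = γ.map T := by
          rw [hmapT]
      _ = ((volume : Measure (Fin dZ → ℝ)).withDensity stdDens).map T := by
          rw [← stdG_eq_withDensity]
      _ = ((volume : Measure (Fin dZ → ℝ)).map T).withDensity (fun x => stdDens (Tinv x)) := h3
      _ = ((ENNReal.ofReal |L.det⁻¹|) • (volume : Measure (Fin dZ → ℝ))).withDensity
            (fun x => stdDens (Tinv x)) := by rw [hvolT]
      _ = (volume : Measure (Fin dZ → ℝ)).withDensity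
            (fun x => ENNReal.ofReal |L.det⁻¹| * stdDens (Tinv x)) := by
          ext S hS
          rw [withDensity_apply _ hS, withDensity_apply _ hS, Measure.restrict_smul,
            lintegral_smul_measure, lintegral_const_mul _ hsTm, smul_eq_mul]
  have hdens_ae : stdDens (d := dZ) =ᵐ[(volume : Measure (Fin dZ → ℝ))]
      fun x => ENNReal.ofReal |L.det⁻¹| * stdDens (Tinv x) :=
    (withDensity_eq_iff_of_sigmaFinite measurable_stdDens.aemeasurable
      ((measurable_const.mul hsTm)).aemeasurable).mp hstd
  have hfun2 : (fun x => ENNReal.ofReal |L.det⁻¹| * stdDens (Tinv x))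
      = fun x => ENNReal.ofReal (|L.det⁻¹| * ∏ i, gaussianPDFReal 0 1 (Tinv x i)) := by
    funext x
    rw [stdDens_eq, ← ENNReal.ofReal_mul (abs_nonneg _)]
  have hdens_pt : stdDens (d := dZ) = fun x => ENNReal.ofReal |L.det⁻¹| * stdDens (Tinv x) := by
    rw [hfun2] at hdens_ae ⊢
    refine (Continuous.ae_eq_iff_eq (μ := (volume : Measure (Fin dZ → ℝ)))
      continuous_stdDens ?_).mp hdens_ae
    refine ENNReal.continuous_ofReal.comp ?_
    exact continuous_const.mul ((continuous_finset_prod _ fun i _ =>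
      continuous_gaussianPDFReal.comp (continuous_apply i)).comp hTinvcont)
  -- convert to a real identity
  have hreal : ∀ y : Fin dZ → ℝ, (∏ i, gaussianPDFReal 0 1 (T y i))
      = |L.det⁻¹| * ∏ i, gaussianPDFReal 0 1 (y i) := by
    intro y
    have hpt := congrFun hdens_pt (T y)
    rw [hTinvT y, stdDens_eq, stdDens_eq, ← ENNReal.ofReal_mul (abs_nonneg _)] at hpt
    refine (ENNReal.ofReal_eq_ofReal_iff
      (Finset.prod_nonneg fun i _ => gaussianPDFReal_nonneg 0 1 _)
      (mul_nonneg (abs_nonneg _)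
        (Finset.prod_nonneg fun i _ => gaussianPDFReal_nonneg 0 1 _))).mp hpt
  have hprod : ∀ z : Fin dZ → ℝ, (∏ i, gaussianPDFReal 0 1 (z i))
      = ((√(2 * π))⁻¹) ^ dZ * Real.exp (-(dotProduct z z) / 2) := by
    intro z
    unfold gaussianPDFReal
    rw [Finset.prod_mul_distrib, Finset.prod_const, ← Real.exp_sum]
    have h1 : ∀ i : Fin dZ, -(z i - 0) ^ 2 / (2 * ((1:ℝ≥0):ℝ)) = -(z i * z i) / 2 := by
      intro i; push_cast; ring
    congr 1
    · congr 2
      · push_cast; ring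
      · exact Fintype.card_fin dZ
    · congr 1
      rw [Finset.sum_congr rfl fun i _ => h1 i]
      unfold dotProduct
      rw [← Finset.sum_div, ← Finset.sum_neg_distrib]
  -- the quadratic identity
  have hK : (0:ℝ) < ((√(2 * π))⁻¹) ^ dZ := by
    apply pow_pos
    rw [inv_pos]
    exact Real.sqrt_pos.mpr (by positivity)
  have hquad : ∀ y : Fin dZ → ℝ, Real.exp (-(dotProduct (T y) (T y)) / 2)
      = |L.det⁻¹| * Real.exp (-(dotProduct y y) / 2) := by
    intro y
    have := hreal y
    rw [hprod, hprod] at this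
    have h2 : ((√(2 * π))⁻¹) ^ dZ * Real.exp (-(dotProduct (T y) (T y)) / 2)
        = ((√(2 * π))⁻¹) ^ dZ * (|L.det⁻¹| * Real.exp (-(dotProduct y y) / 2)) := by
      rw [this]; ring
    exact mul_left_cancel₀ hK.ne' h2
  have hT0 : T 0 = v := by
    rw [hTdef]
    simp only [Matrix.mulVec_zero, zero_add]
  have hconst : |L.det⁻¹| = Real.exp (-(dotProduct v v) / 2) := by
    have := hquad 0
    rw [hT0, zero_dotProduct, neg_zero, zero_div, Real.exp_zero, mul_one] at this
    exact this.symm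
  have hstar : ∀ y : Fin dZ → ℝ, dotProduct (T y) (T y)
      = dotProduct y y + dotProduct v v := by
    intro y
    have := hquad y
    rw [hconst, ← Real.exp_add] at this
    have h2 := Real.exp_injective this
    linarith
  have hexpand : ∀ y : Fin dZ → ℝ, dotProduct (L.mulVec y) (L.mulVec y)
      + 2 * dotProduct (L.mulVec y) v = dotProduct y y := by
    intro y
    have := hstar y
    rw [hTdef] at this
    simp only [add_dotProduct, dotProduct_add] at this
    have h4 := dotProduct_comm (L.mulVec y) v
    linarith
  have hperp : ∀ y : Fin dZ → ℝ, dotProduct (L.mulVec y) v = 0 := by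
    intro y
    have h1 := hexpand y
    have h2 := hexpand (-y)
    rw [Matrix.mulVec_neg] at h2
    simp only [neg_dotProduct, dotProduct_neg, neg_neg] at h2
    linarith
  have hv0 : v = 0 := by
    have hsurj : Function.Surjective L.mulVec :=
      Matrix.mulVec_surjective_iff_isUnit.mpr ((Matrix.isUnit_iff_isUnit_det L).mpr hunit)
    obtain ⟨x, hx⟩ := hsurj v
    have := hperp x
    rw [hx] at this
    exact dotProduct_self_eq_zero.mp this
  have hnorm : ∀ y : Fin dZ → ℝ, dotProduct (L.mulVec y) (L.mulVec y)
      = dotProduct y y := by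
    intro y
    have := hexpand y
    rw [hv0] at this
    simp only [dotProduct_zero, mul_zero, add_zero] at this
    exact this
  have hLtL : L.transpose * L = 1 := transpose_mul_self_eq_one hnorm
  have hLLt : L * L.transpose = 1 := mul_eq_one_comm.mp hLtL
  -- conclusion 1: f = ftilde ∘ L
  have hfae : f =ᵐ[γ] fun x => ftilde (L.mulVec x) := by
    filter_upwards [haeT] with x hx
    rw [hx.2.1, hTdef]
    simp only [hv0, add_zero]
  have hfae_vol : f =ᵐ[(volume : Measure (Fin dZ → ℝ))] fun x => ftilde (L.mulVec x) :=
    hfae.filter_mono (volume_ac_stdG dZ).ae_le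
  have hfeq : f = fun x => ftilde (L.mulVec x) := by
    refine (Continuous.ae_eq_iff_eq (μ := (volume : Measure (Fin dZ → ℝ))) hfc ?_).mp hfae_vol
    exact hftc.comp (LinearMap.continuous_on_pi L.mulVecLin)
  -- conclusion 2: Ct = L * C
  have hrelae : (fun x => Ct.transpose.mulVec (L.mulVec x))
      =ᵐ[(volume : Measure (Fin dZ → ℝ))] fun x => C.transpose.mulVec x + κ := by
    refine Filter.EventuallyEq.filter_mono ?_ (volume_ac_stdG dZ).ae_le
    filter_upwards [haeT] with x hx
    have := hx.2.2
    rw [hTdef] at this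
    simpa only [hv0, add_zero] using this
  have hreleq : (fun x => Ct.transpose.mulVec (L.mulVec x))
      = fun x => C.transpose.mulVec x + κ := by
    refine (Continuous.ae_eq_iff_eq (μ := (volume : Measure (Fin dZ → ℝ))) ?_ ?_).mp hrelae
    · exact (LinearMap.continuous_on_pi Ct.transpose.mulVecLin).comp
        (LinearMap.continuous_on_pi L.mulVecLin)
    · exact ((LinearMap.continuous_on_pi C.transpose.mulVecLin)).add continuous_const
  have hκ0 : κ = 0 := by
    have := congrFun hreleq 0
    simp only [Matrix.mulVec_zero, zero_add] at this
    exact this.symm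
  have hCtL : Ct.transpose * L = C.transpose := by
    apply matrix_eq_of_mulVec_eq
    intro x
    have := congrFun hreleq x
    rw [hκ0, add_zero] at this
    rw [← Matrix.mulVec_mulVec]
    exact this
  have hLtCt : L.transpose * Ct = C := by
    have := congrArg Matrix.transpose hCtL
    rwa [Matrix.transpose_mul, Matrix.transpose_transpose, Matrix.transpose_transpose] at this
  refine ⟨L, hLLt, fun z => congrFun hfeq z, ?_⟩
  calc Ct = (L * L.transpose) * Ct := by rw [hLLt, Matrix.one_mul]
    _ = L * (L.transpose * Ct) := by rw [Matrix.mul_assoc]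
    _ = L * C := by rw [hLtCt]

/-- **Identifiability with arbitrary (not necessarily linear-in-label) shifts.**
If two models with arbitrary latent shift vectors `c_e` resp. `c̃_e` and base
distributions `N(-c₀, I)` resp. `N(-c̃₀, I)` induce the same observed distributions in
every environment, `f, f̃` are `C²`-diffeomorphisms onto their images, and the matrix
`C̃` (resp. `C`) of relative shifts `c̃_e - c̃₀` (resp. `c_e - c₀`) has rank `d_Z`, then
there is an orthogonal `O` with `f̃⁻¹ ∘ f = O·` (equivalently `f = f̃ ∘ O·`) and
`C̃ = O C`. -/
theorem identifiability_arbitrary_shifts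
    (dZ D M : ℕ) (hdZ : 1 ≤ dZ) (hD : 1 ≤ D)
    (c ct : Fin (M + 1) → (Fin dZ → ℝ))
    (C Ct : Matrix (Fin dZ) (Fin M) ℝ)
    (hC : C = Matrix.of fun j (e : Fin M) => c e.succ j - c 0 j)
    (hCt : Ct = Matrix.of fun j (e : Fin M) => ct e.succ j - ct 0 j)
    (f ftilde : (Fin dZ → ℝ) → (Fin D → ℝ))
    (hf : IsC2DiffeoOntoImage f) (hft : IsC2DiffeoOntoImage ftilde)
    (heq : ∀ e : Fin (M + 1),
      (gaussianId dZ (-(c 0))).map (fun z => f (z + c e)) =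
        (gaussianId dZ (-(ct 0))).map (fun z => ftilde (z + ct e)))
    (hrank : Ct.rank = dZ ∨ C.rank = dZ) :
    ∃ O : Matrix (Fin dZ) (Fin dZ) ℝ,
      O * O.transpose = 1 ∧
      (∀ z : Fin dZ → ℝ, f z = ftilde (O.mulVec z)) ∧
      Ct = O * C := by
  rcases hrank with hrank | hrank
  · exact identifiability_aux dZ D M c ct C Ct hC hCt f ftilde hf hft heq hrank
  · obtain ⟨O', hO'1, hO'2, hO'3⟩ := identifiability_aux dZ D M ct c Ct C hCt hC ftilde f
      hft hf (fun e => (heq e).symm) hrank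
    have hO'tO' : O'.transpose * O' = 1 := mul_eq_one_comm.mp hO'1
    refine ⟨O'.transpose, by rwa [Matrix.transpose_transpose], ?_, ?_⟩
    · intro z
      rw [hO'2 (O'.transpose.mulVec z), Matrix.mulVec_mulVec, hO'1, Matrix.one_mulVec]
    · rw [hO'3, ← Matrix.mul_assoc, hO'tO', Matrix.one_mul]
end
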